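/- arXiv:1208.1238 — 2 statements merged into one kernel-verified Lean document; each statement's English description precedes it below -/
import Mathlib

section
/- Let n ≥ 1 and let μ = (-1)^n. The set of n×n complex matrices B satisfying B·J_n(μ) + Bᵀ = 0 is a complex vector subspace of the n×n matrices of dimension ⌈n/2⌉. -/
open Matrix BigOperators Finset

noncomputable section

/-- The `n × n` upper-triangular Jordan block with eigenvalue `μ`:
`μ` on the diagonal, `1` on the first superdiagonal, `0` elsewhere. -/
def Jmat (n : ℕ) (μ : ℂ) : Matrix (Fin n) (Fin n) ℂ :=
  Matrix.of fun i j => if i = j then μ else if (j : ℕ) = (i : ℕ) + 1 then 1 else 0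

/-- The Pascal-type matrix `Δ_n`, whose 1-based `(i,j)` entry is
`μ^i * (−μ)^(j−1) * C(j−1, n−i)` (here indices are 0-based, so shifted by one). -/
def Delta (n : ℕ) (μ : ℂ) : Matrix (Fin n) (Fin n) ℂ :=
  Matrix.of fun i j =>
    μ ^ ((i : ℕ) + 1) * (-μ) ^ (j : ℕ) * ((j : ℕ).choose (n - ((i : ℕ) + 1)) : ℂ)

/-- The `2n × 2n` block matrix `H_{2n}(μ) = [[0, I],[J_n(μ), 0]]`. -/
def Hmat (n : ℕ) (μ : ℂ) : Matrix (Fin n ⊕ Fin n) (Fin n ⊕ Fin n) ℂ :=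
  Matrix.fromBlocks 0 1 (Jmat n μ) 0

/-- The `n × n` reversed identity matrix: `1` on the antidiagonal, `0` elsewhere. -/
def Rev (n : ℕ) : Matrix (Fin n) (Fin n) ℂ :=
  Matrix.of fun i j => if j = i.rev then 1 else 0

namespace Stmt14

variable {n : ℕ}

lemma mul_Jmat_apply (ν : ℂ) (A : Matrix (Fin n) (Fin n) ℂ) (i j : Fin n) :
    (A * Jmat n ν) i j
      = ν * A i j + (if h : 0 < (j : ℕ) then A i ⟨(j : ℕ) - 1, by omega⟩ else 0) := by
  rw [Matrix.mul_apply]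
  have hsplit : ∀ k : Fin n, A i k * Jmat n ν k j
      = (if k = j then ν * A i j else 0)
        + (if (j : ℕ) = (k : ℕ) + 1 then A i k else 0) := by
    intro k
    by_cases h1 : k = j
    · subst h1
      simp [Jmat, mul_comm, show ¬((k : ℕ) = (k : ℕ) + 1) by omega]
    · simp only [Jmat, Matrix.of_apply, if_neg h1]
      split <;> simp [mul_comm]
  rw [Finset.sum_congr rfl fun k _ => hsplit k, Finset.sum_add_distrib,
    Finset.sum_ite_eq' Finset.univ j]
  simp only [Finset.mem_univ, if_true]
  congr 1
  by_cases hj : 0 < (j : ℕ)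
  · rw [dif_pos hj]
    have hcond : ∀ k : Fin n, ((j : ℕ) = (k : ℕ) + 1) ↔ (k = ⟨(j : ℕ) - 1, by omega⟩) := by
      intro k; rw [Fin.ext_iff]; constructor <;> intro h <;> simp_all <;> omega
    rw [Finset.sum_congr rfl fun k _ => if_congr (hcond k) rfl rfl,
      Finset.sum_ite_eq' Finset.univ]
    simp
  · rw [dif_neg hj]
    have : ∀ k : Fin n, ¬((j : ℕ) = (k : ℕ) + 1) := by intro k; omega
    simp [this]

lemma transpose_Jmat_mul_apply (ν : ℂ) (A : Matrix (Fin n) (Fin n) ℂ) (i j : Fin n) :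
    ((Jmat n ν)ᵀ * A) i j
      = ν * A i j + (if h : 0 < (i : ℕ) then A ⟨(i : ℕ) - 1, by omega⟩ j else 0) := by
  have := mul_Jmat_apply ν Aᵀ j i
  rw [show (Jmat n ν)ᵀ * A = (Aᵀ * Jmat n ν)ᵀ by simp [Matrix.transpose_mul]]
  simpa using this

/-- entries of powers of the Jordan block -/
lemma Jmat_pow_apply (ν : ℂ) (e : ℕ) (i j : Fin n) :
    (Jmat n ν ^ e) i j
      = if (i : ℕ) ≤ (j : ℕ) then ν ^ (e - ((j : ℕ) - (i : ℕ))) * ((e.choose ((j : ℕ) - (i : ℕ))) : ℂ)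
        else 0 := by
  induction e generalizing i j with
  | zero =>
    rcases le_or_gt (i : ℕ) (j : ℕ) with h | h
    · rw [if_pos h]
      by_cases hji : (j : ℕ) = (i : ℕ)
      · have : i = j := Fin.ext (by omega)
        subst this
        simp
      · have h1 : i ≠ j := Fin.ne_of_val_ne (by omega)
        rw [pow_zero, Matrix.one_apply_ne h1, Nat.choose_eq_zero_of_lt (by omega)]
        simp
    · have h1 : i ≠ j := Fin.ne_of_val_ne (by omega)
      rw [if_neg (by omega), pow_zero, Matrix.one_apply_ne h1]
  | succ e ih =>
    rw [pow_succ, mul_Jmat_apply, ih i j]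
    by_cases hj : 0 < (j : ℕ)
    · rw [dif_pos hj, ih i ⟨(j : ℕ) - 1, by omega⟩]
      have hjj : ((⟨(j : ℕ) - 1, by omega⟩ : Fin n) : ℕ) = (j : ℕ) - 1 := rfl
      rw [hjj]
      rcases le_or_gt (i : ℕ) (j : ℕ) with h | h
      · rw [if_pos h, if_pos h]
        by_cases h2 : (i : ℕ) ≤ (j : ℕ) - 1
        · rw [if_pos h2]
          obtain ⟨d', hd⟩ : ∃ d', (j : ℕ) - (i : ℕ) = d' + 1 := ⟨(j : ℕ) - (i : ℕ) - 1, by omega⟩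
          have hd1 : (j : ℕ) - 1 - (i : ℕ) = d' := by omega
          rw [hd, hd1, Nat.choose_succ_succ e d']
          rcases Nat.lt_or_ge (d' + 1) (e + 1 + 1) with hde | hde
          · have h3 : e + 1 - (d' + 1) = e - d' := by omega
            rw [h3]
            by_cases h5 : d' + 1 ≤ e
            · have h6 : e - d' = (e - (d' + 1)) + 1 := by omega
              rw [h6]
              push_cast
              ring
            · have hd'e : d' = e := by omega
              rw [hd'e, Nat.choose_succ_self, Nat.sub_self,
                show e - (e + 1) = 0 by omega]
              push_cast
              ring
          · rw [Nat.choose_eq_zero_of_lt (show e < d' + 1 by omega),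
              Nat.choose_eq_zero_of_lt (show e < d' by omega)]
            simp
        · have hij : (j : ℕ) = (i : ℕ) := by omega
          rw [if_neg h2, hij, Nat.sub_self]
          simp only [Nat.choose_zero_right, Nat.sub_zero, Nat.cast_one]
          push_cast
          ring
      · rw [if_neg (show ¬ ((i : ℕ) ≤ (j : ℕ)) by omega),
          if_neg (show ¬ ((i : ℕ) ≤ (j : ℕ)) by omega),
          if_neg (show ¬ ((i : ℕ) ≤ (j : ℕ) - 1) by omega)]
        simp
    · rw [dif_neg hj]
      have hj0 : (j : ℕ) = 0 := by omega
      by_cases h : (i : ℕ) ≤ (j : ℕ)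
      · have hij : (i : ℕ) = 0 := by omega
        rw [if_pos h, if_pos h, hj0, hij]
        simp [pow_succ]
        ring
      · rw [if_neg h, if_neg h]
        simp

lemma Delta_apply (μ : ℂ) (i j : Fin n) :
    Delta n μ i j
      = μ ^ ((i : ℕ) + 1) * (-μ) ^ (j : ℕ) * (((j : ℕ).choose (n - ((i : ℕ) + 1))) : ℂ) := rfl

lemma Nmat_pow_apply (a : ℕ) (i j : Fin n) :
    (Jmat n 0 ^ a) i j = if (j : ℕ) = (i : ℕ) + a then 1 else 0 := by
  rw [Jmat_pow_apply]
  by_cases h : (j : ℕ) = (i : ℕ) + a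
  · rw [if_pos h, if_pos (by omega), show a - ((j : ℕ) - (i : ℕ)) = 0 by omega,
      show (j : ℕ) - (i : ℕ) = a by omega]
    simp
  · rw [if_neg h]
    by_cases h2 : (i : ℕ) ≤ (j : ℕ)
    · rw [if_pos h2]
      rcases Nat.lt_or_ge ((j : ℕ) - (i : ℕ)) a with h3 | h3
      · rw [zero_pow (show a - ((j : ℕ) - (i : ℕ)) ≠ 0 by omega)]
        ring
      · rw [Nat.choose_eq_zero_of_lt (by omega)]
        simp
    · rw [if_neg h2]

lemma Nmat_pow_mul_apply (a : ℕ) (A : Matrix (Fin n) (Fin n) ℂ) (i j : Fin n) :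
    (Jmat n 0 ^ a * A) i j = if h : (i : ℕ) + a < n then A ⟨(i : ℕ) + a, h⟩ j else 0 := by
  rw [Matrix.mul_apply]
  by_cases h : (i : ℕ) + a < n
  · rw [dif_pos h]
    have hc : ∀ k : Fin n, ((k : ℕ) = (i : ℕ) + a) ↔ (k = ⟨(i : ℕ) + a, h⟩) := by
      intro k; rw [Fin.ext_iff]
    rw [Finset.sum_congr rfl fun k _ => by
      rw [Nmat_pow_apply, if_congr (hc k) rfl rfl, ite_mul, one_mul, zero_mul]]
    rw [Finset.sum_ite_eq' Finset.univ]
    simp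
  · rw [dif_neg h]
    rw [Finset.sum_congr rfl fun k _ => by
      rw [Nmat_pow_apply, if_neg (show ¬ ((k : ℕ) = (i : ℕ) + a) by omega), zero_mul]]
    simp

lemma F1 {μ : ℂ} (hμ2 : μ * μ = 1) :
    (Jmat n 0)ᵀ * Delta n μ * Jmat n μ = (-μ) • (Delta n μ * Jmat n 0) := by
  ext i j
  rw [Matrix.smul_apply, mul_Jmat_apply μ ((Jmat n 0)ᵀ * Delta n μ) i j,
    mul_Jmat_apply 0 (Delta n μ) i j]
  simp only [transpose_Jmat_mul_apply, zero_mul, zero_add, smul_eq_mul]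
  by_cases hi : 0 < (i : ℕ)
  · simp only [dif_pos hi]
    by_cases hj : 0 < (j : ℕ)
    · simp only [dif_pos hj, Delta_apply, Fin.val_mk]
      obtain ⟨i', hi'⟩ : ∃ i', (i : ℕ) = i' + 1 := ⟨(i : ℕ) - 1, by omega⟩
      obtain ⟨j', hj'⟩ : ∃ j', (j : ℕ) = j' + 1 := ⟨(j : ℕ) - 1, by omega⟩
      have hin : (i : ℕ) < n := i.isLt
      rw [hi', hj']
      simp only [Nat.add_sub_cancel]
      obtain ⟨s, hs⟩ : ∃ s, n - (i' + 1) = s + 1 := ⟨n - (i' + 1) - 1, by omega⟩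
      rw [show n - (i' + 1 + 1) = s by omega, hs, Nat.choose_succ_succ j' s]
      push_cast
      linear_combination (-((j'.choose (s+1) : ℂ)) * (-μ) ^ j' * μ ^ (i' + 1)) * hμ2
    · simp only [dif_neg hj, Delta_apply, Fin.val_mk]
      rw [show (j : ℕ) = 0 by omega,
        Nat.choose_eq_zero_of_lt (show 0 < n - ((i : ℕ) - 1 + 1) by omega)]
      simp
  · simp only [dif_neg hi]
    by_cases hj : 0 < (j : ℕ)
    · simp only [dif_pos hj, Delta_apply, Fin.val_mk]
      rw [show (i : ℕ) = 0 by omega,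
        Nat.choose_eq_zero_of_lt (show (j : ℕ) - 1 < n - (0 + 1) by omega)]
      simp
    · simp only [dif_neg hj]
      simp

lemma ortho (m r : ℕ) :
    ∑ k ∈ range (m + 1), (-1 : ℤ) ^ k * (k.choose r) * (m.choose k)
      = if r = m then (-1 : ℤ) ^ m else 0 := by
  rcases Nat.lt_or_ge m r with hrm | hrm
  · rw [if_neg (by omega)]
    apply Finset.sum_eq_zero
    intro k hk
    rw [Finset.mem_range] at hk
    rw [Nat.choose_eq_zero_of_lt (by omega)]
    simp
  · have hsplit : range (m + 1) = Finset.Ico 0 r ∪ Finset.Ico r (m + 1) := by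
      rw [Finset.range_eq_Ico, Finset.Ico_union_Ico_eq_Ico (by omega) (by omega)]
    rw [hsplit, Finset.sum_union (by
      simp [Finset.disjoint_left, Finset.mem_Ico]
      omega)]
    have h1 : ∑ k ∈ Finset.Ico 0 r, (-1 : ℤ) ^ k * (k.choose r) * (m.choose k) = 0 := by
      apply Finset.sum_eq_zero
      intro k hk
      rw [Finset.mem_Ico] at hk
      rw [Nat.choose_eq_zero_of_lt (by omega)]
      simp
    rw [h1, zero_add, Finset.sum_Ico_eq_sum_range]
    have h2 : ∀ t ∈ range (m + 1 - r), (-1 : ℤ) ^ (r + t) * ((r + t).choose r) * (m.choose (r + t))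
        = ((-1 : ℤ) ^ r * (m.choose r)) * ((-1 : ℤ) ^ t * ((m - r).choose t)) := by
      intro t ht
      rw [Finset.mem_range] at ht
      have hc : m.choose (r + t) * (r + t).choose r = m.choose r * (m - r).choose (r + t - r) :=
        Nat.choose_mul (by omega)
      rw [Nat.add_sub_cancel_left] at hc
      have hc' : ((m.choose (r + t) : ℤ)) * ((r + t).choose r)
          = (m.choose r : ℤ) * ((m - r).choose t) := by exact_mod_cast hc
      rw [pow_add]
      linear_combination ((-1 : ℤ) ^ r * (-1 : ℤ) ^ t) * hc'
    rw [Finset.sum_congr rfl h2, ← Finset.mul_sum,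
      show m + 1 - r = (m - r) + 1 by omega, Int.alternating_sum_range_choose]
    by_cases h : r = m
    · rw [if_pos h, if_pos (by omega), h]
      simp
    · rw [if_neg (by omega), if_neg h]
      simp

lemma P2 (n r : ℕ) (hr : r < n) :
    ∑ k ∈ range n, (-1 : ℤ) ^ k * (k.choose r) * (n.choose (k + 1)) = (-1 : ℤ) ^ r := by
  induction n generalizing r with
  | zero => omega
  | succ n ih =>
    have hstep : ∀ k, ((n + 1).choose (k + 1) : ℤ) = (n.choose k : ℤ) + (n.choose (k + 1) : ℤ) := by
      intro k
      exact_mod_cast Nat.choose_succ_succ n k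
    have hsum : ∑ k ∈ range (n + 1), (-1 : ℤ) ^ k * (k.choose r) * ((n + 1).choose (k + 1))
        = (∑ k ∈ range (n + 1), (-1 : ℤ) ^ k * (k.choose r) * (n.choose k))
          + (∑ k ∈ range (n + 1), (-1 : ℤ) ^ k * (k.choose r) * (n.choose (k + 1))) := by
      rw [← Finset.sum_add_distrib]
      apply Finset.sum_congr rfl
      intro k _
      rw [hstep k]
      ring
    rw [hsum, ortho n r, Finset.sum_range_succ, Nat.choose_succ_self]
    rcases Nat.lt_or_ge r n with h | h
    · rw [if_neg (by omega), ih r h]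
      simp
    · have hrn : r = n := by omega
      have hz : ∑ k ∈ range n, (-1 : ℤ) ^ k * (k.choose r) * (n.choose (k + 1)) = 0 := by
        apply Finset.sum_eq_zero
        intro k hk
        rw [Finset.mem_range] at hk
        rw [Nat.choose_eq_zero_of_lt (by omega)]
        simp
      rw [if_pos hrn, hz, hrn]
      simp

lemma F0 (μ : ℂ) : Jmat n μ = μ • (1 : Matrix (Fin n) (Fin n) ℂ) + Jmat n 0 := by
  ext i j
  simp only [Jmat, Matrix.of_apply, Matrix.add_apply, Matrix.smul_apply, Matrix.one_apply,
    smul_eq_mul]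
  by_cases h : i = j <;> simp [h]

lemma commute_JN (μ : ℂ) : Commute (Jmat n μ) (Jmat n 0) := by
  unfold Commute SemiconjBy
  rw [F0 μ, add_mul, mul_add, Matrix.smul_mul, Matrix.mul_smul, one_mul, mul_one]

lemma F2 {μ : ℂ} (hμ2 : μ * μ = 1) :
    (Jmat n μ)ᵀ * Delta n μ * Jmat n μ = Delta n μ := by
  have ht : (Jmat n μ)ᵀ = μ • (1 : Matrix (Fin n) (Fin n) ℂ) + (Jmat n 0)ᵀ := by
    rw [F0 μ]; simp
  rw [ht, add_mul, add_mul, Matrix.smul_mul, Matrix.smul_mul, one_mul, F1 hμ2]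
  rw [F0 μ, Matrix.mul_add, Matrix.mul_smul, mul_one, smul_add, smul_smul, hμ2]
  simp

lemma L1 {μ : ℂ} (hμ2 : μ * μ = 1) (m : ℕ) :
    ((Jmat n 0)ᵀ) ^ m * Delta n μ * (Jmat n μ) ^ m
      = ((-μ) ^ m) • (Delta n μ * (Jmat n 0) ^ m) := by
  induction m with
  | zero => simp
  | succ m ih =>
    have hc : (Jmat n 0) ^ m * Jmat n μ = Jmat n μ * (Jmat n 0) ^ m :=
      (((commute_JN μ).symm).pow_left m).eq
    have h1 : ((Jmat n 0)ᵀ) ^ (m + 1) * Delta n μ * (Jmat n μ) ^ (m + 1)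
        = (Jmat n 0)ᵀ * (((Jmat n 0)ᵀ) ^ m * Delta n μ * (Jmat n μ) ^ m) * Jmat n μ := by
      rw [pow_succ' ((Jmat n 0)ᵀ), pow_succ (Jmat n μ)]
      simp only [mul_assoc]
    rw [h1, ih, Matrix.mul_smul, Matrix.smul_mul]
    have h2 : (Jmat n 0)ᵀ * (Delta n μ * (Jmat n 0) ^ m) * Jmat n μ
        = ((Jmat n 0)ᵀ * Delta n μ * Jmat n μ) * (Jmat n 0) ^ m := by
      simp only [mul_assoc]
      rw [hc]
    rw [h2, F1 hμ2, Matrix.smul_mul, smul_smul, ← pow_succ, mul_assoc, ← pow_succ']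

lemma L2 {μ : ℂ} (hμ2 : μ * μ = 1) (m : ℕ) :
    ((Jmat n μ)ᵀ) ^ m * Delta n μ * (Jmat n μ) ^ m = Delta n μ := by
  induction m with
  | zero => simp
  | succ m ih =>
    have h1 : ((Jmat n μ)ᵀ) ^ (m + 1) * Delta n μ * (Jmat n μ) ^ (m + 1)
        = (Jmat n μ)ᵀ * (((Jmat n μ)ᵀ) ^ m * Delta n μ * (Jmat n μ) ^ m) * Jmat n μ := by
      rw [pow_succ' ((Jmat n μ)ᵀ), pow_succ (Jmat n μ)]
      simp only [mul_assoc]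
    rw [h1, ih, F2 hμ2]

lemma mu_sq {μ : ℂ} (hn : 1 ≤ n) (hμ : μ = (-1) ^ n) : μ * μ = 1 := by
  rw [hμ, ← pow_add, show n + n = 2 * n by ring, pow_mul]
  norm_num

lemma lastcol (hn : 1 ≤ n) {μ : ℂ} (hμ : μ = (-1) ^ n) (i : Fin n) :
    (Delta n μ)ᵀ i ⟨n - 1, by omega⟩ + (Delta n μ * (Jmat n μ) ^ n) i ⟨n - 1, by omega⟩ = 0 := by
  have hμ2 : μ * μ = 1 := mu_sq hn hμ
  rw [Matrix.transpose_apply, Matrix.mul_apply, Delta_apply]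
  have hterm : ∀ k : Fin n, Delta n μ i k * (Jmat n μ ^ n) k ⟨n - 1, by omega⟩
      = (μ ^ ((i : ℕ) + 2)) * ((-1 : ℂ) ^ (k : ℕ) * (((k : ℕ).choose (n - 1 - (i : ℕ))) : ℂ)
          * ((n.choose ((k : ℕ) + 1)) : ℂ)) := by
    intro k
    rw [Delta_apply, Jmat_pow_apply, if_pos (show (k : ℕ) ≤ ((⟨n - 1, by omega⟩ : Fin n) : ℕ) by
      simp only [Fin.val_mk]; omega)]
    simp only [Fin.val_mk]
    rw [show n - ((n - 1) - (k : ℕ)) = (k : ℕ) + 1 by omega,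
      show (n - 1) - (k : ℕ) = n - ((k : ℕ) + 1) by omega,
      Nat.choose_symm (show (k : ℕ) + 1 ≤ n by omega),
      show n - ((i : ℕ) + 1) = n - 1 - (i : ℕ) by omega, neg_pow]
    have hk : (μ * μ) ^ (k : ℕ) = 1 := by rw [hμ2, one_pow]
    linear_combination ((-1 : ℂ) ^ (k : ℕ) * (((k : ℕ).choose (n - 1 - (i : ℕ))) : ℂ)
      * ((n.choose ((k : ℕ) + 1)) : ℂ) * μ ^ ((i : ℕ) + 2)) * hk
  rw [Finset.sum_congr rfl (fun k _ => hterm k), ← Finset.mul_sum]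
  have hPc : ∑ k : Fin n, (-1 : ℂ) ^ (k : ℕ) * (((k : ℕ).choose (n - 1 - (i : ℕ))) : ℂ)
      * ((n.choose ((k : ℕ) + 1)) : ℂ) = (-1 : ℂ) ^ (n - 1 - (i : ℕ)) := by
    rw [Fin.sum_univ_eq_sum_range (fun k => (-1 : ℂ) ^ k * ((k.choose (n - 1 - (i : ℕ))) : ℂ)
      * ((n.choose (k + 1)) : ℂ))]
    have hP := P2 n (n - 1 - (i : ℕ)) (by omega)
    have := congrArg (fun z : ℤ => (z : ℂ)) hP
    push_cast at this
    convert this using 1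
  rw [hPc]
  simp only [Fin.val_mk]
  rw [show (n - 1) + 1 = n by omega, Nat.sub_self, Nat.choose_zero_right, Nat.cast_one, mul_one]
  rcases Nat.even_or_odd n with he | ho
  · have hμ1 : μ = 1 := by rw [hμ, he.neg_one_pow]
    rw [hμ1]
    simp only [one_pow, one_mul]
    have h1 : (-(1 : ℂ)) ^ (n - 1 - (i : ℕ)) * (-1) ^ (i : ℕ) = -1 := by
      rw [← pow_add, show n - 1 - (i : ℕ) + (i : ℕ) = n - 1 by omega]
      exact Odd.neg_one_pow (Nat.Even.sub_odd hn he odd_one)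
    have h2 : (-(1 : ℂ)) ^ (i : ℕ) * (-1) ^ (i : ℕ) = 1 := by
      rw [← pow_add]
      exact Even.neg_one_pow ⟨(i : ℕ), by ring⟩
    linear_combination (-1 : ℂ) ^ (i : ℕ) * h1 - (-1 : ℂ) ^ (n - 1 - (i : ℕ)) * h2
  · have hμ1 : μ = -1 := by rw [hμ, ho.neg_one_pow]
    rw [hμ1, show (-(-1 : ℂ)) = 1 by norm_num, one_pow, mul_one, ← pow_add,
      show ((i : ℕ) + 2) + (n - 1 - (i : ℕ)) = n + 1 by omega,
      ho.neg_one_pow, Even.neg_one_pow ho.add_one]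
    norm_num

set_option maxHeartbeats 1000000 in
lemma F3 (hn : 1 ≤ n) {μ : ℂ} (hμ : μ = (-1) ^ n) :
    (Delta n μ)ᵀ = -(Delta n μ * (Jmat n μ) ^ n) := by
  have hμ2 := mu_sq hn hμ
  have hμ0 : μ ≠ 0 := by rw [hμ]; exact pow_ne_zero _ (by norm_num)
  set J := Jmat n μ with hJ
  set N := Jmat n 0 with hN
  set D := Delta n μ with hD
  set X := Dᵀ + D * J ^ n with hX
  suffices hX0 : X = 0 by
    exact eq_neg_of_add_eq_zero_left hX0
  have hpow : J ^ n = J * J ^ (n - 1) := by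
    rw [← pow_succ']
    congr 1
    omega
  have h1 : Jᵀ * Dᵀ * N = (-μ) • (Nᵀ * Dᵀ) := by
    have h := congrArg Matrix.transpose (F1 (n := n) hμ2)
    simp only [Matrix.transpose_mul, Matrix.transpose_transpose, Matrix.transpose_smul] at h
    rw [mul_assoc]
    exact h
  have h2 : Jᵀ * (D * J ^ n) * N = D * (J ^ (n - 1) * N) := by
    calc Jᵀ * (D * J ^ n) * N = (Jᵀ * D * J) * (J ^ (n - 1) * N) := by
          rw [hpow]; simp only [mul_assoc]
      _ = D * (J ^ (n - 1) * N) := by rw [F2 hμ2]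
  have h3 : μ • (Nᵀ * (D * J ^ n)) = -(D * (N * J ^ (n - 1))) := by
    calc μ • (Nᵀ * (D * J ^ n)) = μ • ((Nᵀ * D * J) * J ^ (n - 1)) := by
          rw [hpow]; simp only [mul_assoc]
      _ = μ • (((-μ) • (D * N)) * J ^ (n - 1)) := by rw [F1 hμ2]
      _ = -(D * (N * J ^ (n - 1))) := by
          rw [Matrix.smul_mul, smul_smul, mul_neg, hμ2, mul_assoc, neg_smul, one_smul]
  have hc : N * J ^ (n - 1) = J ^ (n - 1) * N := ((commute_JN μ).symm.pow_right (n - 1)).eq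
  have hR : Jᵀ * X * N + μ • (Nᵀ * X) = 0 := by
    rw [hX, Matrix.mul_add, Matrix.add_mul, Matrix.mul_add, smul_add, h1, h2, h3, hc]
    rw [neg_smul]
    abel
  have hRe : ∀ i j : Fin n, (Jᵀ * X * N) i j + μ * (Nᵀ * X) i j = 0 := by
    intro i j
    have h := congrArg (fun M : Matrix (Fin n) (Fin n) ℂ => M i j) hR
    simpa using h
  have hcol : ∀ i : Fin n, X i ⟨n - 1, by omega⟩ = 0 := by
    intro i
    have h := lastcol hn hμ i
    rw [hX]
    simpa [Matrix.add_apply] using h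
  have key : ∀ i j : Fin n, 0 < (j : ℕ) →
      μ * X i ⟨(j : ℕ) - 1, by omega⟩
        + (if h : 0 < (i : ℕ) then
            X ⟨(i : ℕ) - 1, by omega⟩ ⟨(j : ℕ) - 1, by omega⟩
              + μ * X ⟨(i : ℕ) - 1, by omega⟩ j else 0) = 0 := by
    intro i j hj
    have h := hRe i j
    rw [mul_Jmat_apply 0 (Jᵀ * X) i j] at h
    rw [dif_pos hj] at h
    rw [transpose_Jmat_mul_apply μ X i ⟨(j : ℕ) - 1, by omega⟩,
      transpose_Jmat_mul_apply 0 X i j] at h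
    simp only [zero_mul, zero_add, Fin.val_mk] at h
    by_cases hi : 0 < (i : ℕ)
    · rw [dif_pos hi, dif_pos hi] at h
      rw [dif_pos hi]
      linear_combination h
    · rw [dif_neg hi, dif_neg hi] at h
      rw [dif_neg hi]
      linear_combination h
  have main : ∀ iv : ℕ, ∀ hiv : iv < n, ∀ j : Fin n, X ⟨iv, hiv⟩ j = 0 := by
    intro iv
    induction iv with
    | zero =>
      intro hiv j
      by_cases hj : (j : ℕ) = n - 1
      · have hje : j = ⟨n - 1, by omega⟩ := Fin.ext (by simpa using hj)
        rw [hje]; exact hcol _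
      · have hk := key ⟨0, hiv⟩ ⟨(j : ℕ) + 1, by omega⟩ (by simp)
        rw [dif_neg (by simp)] at hk
        simp only [Fin.val_mk, Nat.add_sub_cancel, add_zero] at hk
        have hje : (⟨(j : ℕ), by omega⟩ : Fin n) = j := Fin.ext rfl
        rw [hje] at hk
        exact (mul_eq_zero.mp hk).resolve_left hμ0
    | succ iv ih =>
      intro hiv j
      by_cases hj : (j : ℕ) = n - 1
      · have hje : j = ⟨n - 1, by omega⟩ := Fin.ext (by simpa using hj)
        rw [hje]; exact hcol _
      · have hk := key ⟨iv + 1, hiv⟩ ⟨(j : ℕ) + 1, by omega⟩ (by simp)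
        rw [dif_pos (by simp)] at hk
        simp only [Fin.val_mk, Nat.add_sub_cancel] at hk
        rw [ih (by omega) ⟨(j : ℕ), by omega⟩, ih (by omega) ⟨(j : ℕ) + 1, by omega⟩] at hk
        simp only [mul_zero, zero_add, add_zero] at hk
        have hje : (⟨(j : ℕ), by omega⟩ : Fin n) = j := Fin.ext rfl
        rw [hje] at hk
        exact (mul_eq_zero.mp hk).resolve_left hμ0
  ext i j
  have h := main (i : ℕ) i.isLt j
  rw [Fin.eta] at h
  simpa using h

lemma neg_mu_pow_even {μ : ℂ} (hμ2 : μ * μ = 1) (k : ℕ) : ((-μ) : ℂ) ^ (2 * k) = 1 := by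
  rw [pow_mul, neg_sq, sq, hμ2, one_pow]

lemma Tgen (hn : 1 ≤ n) {μ : ℂ} (hμ : μ = (-1) ^ n) (a e : ℕ) (h : e + a ≤ n) :
    (Delta n μ * ((Jmat n 0) ^ a * (Jmat n μ) ^ e))ᵀ
      = -(((-μ) ^ a) • (Delta n μ * ((Jmat n 0) ^ a * (Jmat n μ) ^ (n - (e + a))))) := by
  have hμ2 := mu_sq hn hμ
  set J := Jmat n μ with hJ
  set N := Jmat n 0 with hN
  set D := Delta n μ with hD
  have hJn : J ^ n = J ^ a * (J ^ e * J ^ (n - (e + a))) := by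
    rw [← pow_add, ← pow_add]
    congr 1
    omega
  have hL1 : (Nᵀ) ^ a * (D * J ^ a) = ((-μ) ^ a) • (D * N ^ a) := by
    have h1 := L1 (n := n) hμ2 a
    rw [← hJ, ← hN, ← hD] at h1
    rw [← mul_assoc, h1]
  have hL2 : ∀ (Z : Matrix (Fin n) (Fin n) ℂ), (Jᵀ) ^ e * (D * (J ^ e * Z)) = D * Z := by
    intro Z
    have h2 := L2 (n := n) hμ2 e
    rw [← hJ, ← hD] at h2
    calc (Jᵀ) ^ e * (D * (J ^ e * Z)) = ((Jᵀ) ^ e * D * J ^ e) * Z := by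
          simp only [mul_assoc]
      _ = D * Z := by rw [h2]
  have hcomm : N ^ a * J ^ e = J ^ e * N ^ a :=
    (((commute_JN μ).symm).pow_pow a e).eq
  calc (D * (N ^ a * J ^ e))ᵀ
      = (Jᵀ) ^ e * ((Nᵀ) ^ a * Dᵀ) := by
        simp only [Matrix.transpose_mul, Matrix.transpose_pow]
        simp only [mul_assoc]
    _ = -((Jᵀ) ^ e * ((Nᵀ) ^ a * (D * J ^ n))) := by
        rw [F3 hn hμ]
        simp only [mul_neg, neg_neg]
        rfl
    _ = -((Jᵀ) ^ e * ((Nᵀ) ^ a * (D * J ^ a) * (J ^ e * J ^ (n - (e + a))))) := by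
        rw [hJn]
        simp only [mul_assoc]
    _ = -(((-μ) ^ a) • ((Jᵀ) ^ e * (D * (N ^ a * (J ^ e * J ^ (n - (e + a))))))) := by
        rw [hL1]
        simp only [Matrix.smul_mul, Matrix.mul_smul, mul_assoc]
    _ = -(((-μ) ^ a) • ((Jᵀ) ^ e * (D * (J ^ e * (N ^ a * J ^ (n - (e + a))))))) := by
        have hcc : N ^ a * (J ^ e * J ^ (n - (e + a)))
            = J ^ e * (N ^ a * J ^ (n - (e + a))) := by
          rw [← mul_assoc, hcomm, mul_assoc]
        rw [hcc]
    _ = -(((-μ) ^ a) • (D * (N ^ a * J ^ (n - (e + a))))) := by rw [hL2]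

/-- basis element (without the `Delta` factor) -/
def Pmat (n : ℕ) (μ : ℂ) (k : ℕ) : Matrix (Fin n) (Fin n) ℂ :=
  (Jmat n 0) ^ (2 * k) * (Jmat n μ) ^ (n / 2 - k)
    + if n % 2 = 0 then (Jmat n 0) ^ (2 * k) * (Jmat n μ) ^ (n / 2 - 1 - k) else 0

lemma Pmem (hn : 1 ≤ n) {μ : ℂ} (hμ : μ = (-1) ^ n) (k : ℕ) (hk : k < (n + 1) / 2) :
    (Delta n μ * Pmat n μ k) * Jmat n μ + (Delta n μ * Pmat n μ k)ᵀ = 0 := by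
  have hμ2 := mu_sq hn hμ
  have hstep : ∀ a e : ℕ, (Delta n μ * ((Jmat n 0) ^ a * (Jmat n μ) ^ e)) * Jmat n μ
      = Delta n μ * ((Jmat n 0) ^ a * (Jmat n μ) ^ (e + 1)) := by
    intro a e
    rw [pow_succ]
    simp only [mul_assoc]
  rcases Nat.even_or_odd n with he | ho
  · obtain ⟨h, hh⟩ := he
    have hmod : n % 2 = 0 := by omega
    have hn2 : n / 2 = h := by omega
    have hkh : k < h := by omega
    rw [Pmat, if_pos hmod, hn2, Matrix.mul_add, Matrix.add_mul, Matrix.transpose_add,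
      hstep, hstep, Tgen hn hμ (2 * k) (h - k) (by omega), Tgen hn hμ (2 * k) (h - 1 - k) (by omega),
      neg_mu_pow_even hμ2, one_smul, one_smul,
      show h - k + 1 = (h - 1 - k) + 1 + 1 by omega,
      show n - (h - k + 2 * k) = h - k by omega,
      show n - (h - 1 - k + 2 * k) = (h - 1 - k) + 1 + 1 by omega,
      show h - k = (h - 1 - k) + 1 by omega]
    abel
  · obtain ⟨h, hh⟩ := ho
    have hmod : ¬ (n % 2 = 0) := by omega
    have hn2 : n / 2 = h := by omega
    have hkh : k ≤ h := by omega
    rw [Pmat, if_neg hmod, add_zero, hn2, hstep, Tgen hn hμ (2 * k) (h - k) (by omega),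
      neg_mu_pow_even hμ2, one_smul,
      show n - (h - k + 2 * k) = (h - k) + 1 by omega]
    abel

lemma Pdiag0 {μ : ℂ} (k l : ℕ) (hk : k < (n + 1) / 2) (hl : l < (n + 1) / 2) (hlk : l < k) :
    Pmat n μ k ⟨0, by omega⟩ ⟨2 * l, by omega⟩ = 0 := by
  have h2k : 2 * k < n := by omega
  have hent : ∀ e : ℕ, ((Jmat n 0) ^ (2 * k) * (Jmat n μ) ^ e) ⟨0, by omega⟩ ⟨2 * l, by omega⟩
      = 0 := by
    intro e
    rw [Nmat_pow_mul_apply, dif_pos (by simpa using h2k)]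
    rw [Jmat_pow_apply]
    rw [if_neg (by simp; omega)]
  rw [Pmat, Matrix.add_apply, hent]
  by_cases hmod : n % 2 = 0
  · rw [if_pos hmod, hent, add_zero]
  · rw [if_neg hmod]
    simp

lemma Pdiag_ne (hn : 1 ≤ n) {μ : ℂ} (hμ : μ = (-1) ^ n) (k : ℕ) (hk : k < (n + 1) / 2) :
    Pmat n μ k ⟨0, by omega⟩ ⟨2 * k, by omega⟩ ≠ 0 := by
  have h2k : 2 * k < n := by omega
  have hent : ∀ e : ℕ, ((Jmat n 0) ^ (2 * k) * (Jmat n μ) ^ e) ⟨0, by omega⟩ ⟨2 * k, by omega⟩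
      = μ ^ e := by
    intro e
    rw [Nmat_pow_mul_apply, dif_pos (by simpa using h2k)]
    rw [Jmat_pow_apply, if_pos (by simp)]
    simp
  rw [Pmat, Matrix.add_apply, hent]
  by_cases hmod : n % 2 = 0
  · rw [if_pos hmod, hent]
    have hμ1 : μ = 1 := by
      rw [hμ]
      exact Even.neg_one_pow (Nat.even_iff.mpr hmod)
    rw [hμ1]
    norm_num
  · rw [if_neg hmod]
    simp only [Matrix.zero_apply, add_zero]
    apply pow_ne_zero
    rw [hμ]
    exact pow_ne_zero _ (by norm_num)

lemma Jmat_isUnit {μ : ℂ} (hμ0 : μ ≠ 0) : IsUnit (Jmat n μ) := by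
  rw [Matrix.isUnit_iff_isUnit_det]
  have htri : (Jmat n μ).BlockTriangular id := by
    intro i j hij
    simp only [id] at hij
    simp only [Jmat, Matrix.of_apply]
    rw [if_neg (by exact fun h => absurd h (by exact ne_of_gt hij)), if_neg (by omega)]
  rw [Matrix.det_of_upperTriangular htri]
  have hd : ∀ i : Fin n, Jmat n μ i i = μ := fun i => by simp [Jmat]
  rw [Finset.prod_congr rfl (fun i _ => hd i), Finset.prod_const]
  exact (isUnit_iff_ne_zero).mpr (pow_ne_zero _ hμ0)

lemma Rev_mul_Rev : Rev n * Rev n = 1 := by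
  ext i j
  rw [Matrix.mul_apply]
  simp only [Rev, Matrix.of_apply]
  rw [Finset.sum_congr rfl (fun k _ => by
    rw [show ((if k = i.rev then (1 : ℂ) else 0) * if j = k.rev then 1 else 0)
      = if k = i.rev then (if j = k.rev then (1 : ℂ) else 0) else 0 by
        by_cases h : k = i.rev <;> simp [h]])]
  rw [Finset.sum_ite_eq' Finset.univ i.rev (fun k => if j = k.rev then (1 : ℂ) else 0)]
  simp only [Finset.mem_univ, if_true, Fin.rev_rev]
  rw [Matrix.one_apply]
  by_cases h : j = i
  · subst h; simp
  · rw [if_neg h, if_neg (fun hc => h hc.symm)]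

lemma mulRev_apply (A : Matrix (Fin n) (Fin n) ℂ) (i j : Fin n) :
    (A * Rev n) i j = A i j.rev := by
  rw [Matrix.mul_apply]
  simp only [Rev, Matrix.of_apply]
  rw [Finset.sum_congr rfl (fun k _ => by
    rw [show (A i k * if j = k.rev then (1 : ℂ) else 0)
      = if k = j.rev then A i k else 0 by
        by_cases h : k = j.rev
        · subst h; simp [Fin.rev_rev]
        · rw [if_neg h, if_neg (fun hc => h (by rw [hc, Fin.rev_rev])), mul_zero]])]
  rw [Finset.sum_ite_eq' Finset.univ j.rev (fun k => A i k)]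
  simp

lemma Delta_isUnit (hn : 1 ≤ n) {μ : ℂ} (hμ0 : μ ≠ 0) : IsUnit (Delta n μ) := by
  have hDR : IsUnit (Delta n μ * Rev n) := by
    rw [Matrix.isUnit_iff_isUnit_det]
    have htri : (Delta n μ * Rev n).BlockTriangular OrderDual.toDual := by
      intro i j hij
      have hij' : (i : ℕ) < (j : ℕ) := hij
      rw [mulRev_apply]
      simp only [Delta, Matrix.of_apply, Fin.val_rev]
      rw [Nat.choose_eq_zero_of_lt (by omega)]
      simp
    rw [Matrix.det_of_lowerTriangular _ htri]
    apply isUnit_iff_ne_zero.mpr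
    apply Finset.prod_ne_zero_iff.mpr
    intro i _
    rw [mulRev_apply]
    simp only [Delta, Matrix.of_apply, Fin.val_rev]
    rw [Nat.choose_self]
    simp only [Nat.cast_one, mul_one]
    exact mul_ne_zero (pow_ne_zero _ hμ0) (pow_ne_zero _ (neg_ne_zero.mpr hμ0))
  have : Delta n μ = (Delta n μ * Rev n) * Rev n := by
    rw [mul_assoc, Rev_mul_Rev, mul_one]
  rw [this]
  exact hDR.mul ⟨⟨Rev n, Rev n, Rev_mul_Rev, Rev_mul_Rev⟩, rfl⟩

lemma toeplitz (hn : 1 ≤ n) {C : Matrix (Fin n) (Fin n) ℂ}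
    (hcom : Jmat n 0 * C = C * Jmat n 0) :
    C = ∑ k : Fin n, (C ⟨0, by omega⟩ k) • (Jmat n 0) ^ (k : ℕ) := by
  have hent : ∀ (iv : ℕ) (hiv : iv < n) (j : Fin n), C ⟨iv, hiv⟩ j
      = if h : iv ≤ (j : ℕ) then C ⟨0, by omega⟩ ⟨(j : ℕ) - iv, by omega⟩ else 0 := by
    intro iv
    induction iv with
    | zero =>
      intro hiv j
      rw [dif_pos (by omega)]
      rfl
    | succ iv ih =>
      intro hiv j
      have h := congrArg (fun M : Matrix (Fin n) (Fin n) ℂ => M ⟨iv, by omega⟩ j) hcom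
      rw [show Jmat n 0 * C = Jmat n 0 ^ 1 * C by rw [pow_one],
        Nmat_pow_mul_apply 1 C ⟨iv, by omega⟩ j, mul_Jmat_apply 0 C ⟨iv, by omega⟩ j] at h
      simp only [Fin.val_mk, zero_mul, zero_add] at h
      rw [dif_pos (show iv + 1 < n by omega)] at h
      by_cases hj : 0 < (j : ℕ)
      · rw [dif_pos hj] at h
        rw [h, ih (by omega) ⟨(j : ℕ) - 1, by omega⟩]
        simp only [Fin.val_mk]
        by_cases h2 : iv + 1 ≤ (j : ℕ)
        · rw [dif_pos (by omega), dif_pos h2]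
          congr 1
          exact Fin.ext (by simp; omega)
        · rw [dif_neg (by omega), dif_neg h2]
      · rw [dif_neg hj] at h
        rw [h, dif_neg (by omega)]
  ext i j
  rw [Matrix.sum_apply]
  simp only [Matrix.smul_apply, smul_eq_mul, Nmat_pow_apply]
  rw [Finset.sum_congr rfl (fun k _ => by
    rw [show ((C ⟨0, by omega⟩ k) * if (j : ℕ) = (i : ℕ) + (k : ℕ) then (1 : ℂ) else 0)
      = if (j : ℕ) = (i : ℕ) + (k : ℕ) then C ⟨0, by omega⟩ k else 0 by
        by_cases h : (j : ℕ) = (i : ℕ) + (k : ℕ) <;> simp [h]])]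
  by_cases hij : (i : ℕ) ≤ (j : ℕ)
  · have hcond : ∀ k : Fin n, ((j : ℕ) = (i : ℕ) + (k : ℕ)) ↔ (k = ⟨(j : ℕ) - (i : ℕ), by omega⟩) := by
      intro k
      rw [Fin.ext_iff]
      simp only [Fin.val_mk]
      omega
    rw [Finset.sum_congr rfl (fun k _ => if_congr (hcond k) rfl rfl),
      Finset.sum_ite_eq' Finset.univ]
    simp only [Finset.mem_univ, if_true]
    rw [hent (i : ℕ) i.isLt j, dif_pos hij]
  · rw [Finset.sum_congr rfl (fun k _ => if_neg (by omega)), Finset.sum_const_zero,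
      hent (i : ℕ) i.isLt j, dif_neg hij]

lemma mu_pow_n {μ : ℂ} (hμ : μ = (-1) ^ n) : μ ^ n = μ := by
  rcases Nat.even_or_odd n with he | ho
  · rw [hμ, he.neg_one_pow, one_pow]
  · rw [hμ, ho.neg_one_pow]
    exact ho.neg_one_pow

lemma sol_zero (hn : 1 ≤ n) {μ : ℂ} (hμ : μ = (-1) ^ n)
    [Invertible (Delta n μ)] [Invertible (Jmat n μ)]
    {B : Matrix (Fin n) (Fin n) ℂ} (hB : B * Jmat n μ + Bᵀ = 0)
    (h0 : ∀ l : ℕ, (hl : l < (n + 1) / 2) →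
      (⅟(Delta n μ) * B) ⟨0, by omega⟩ ⟨2 * l, by omega⟩ = 0) :
    B = 0 := by
  have hμ2 := mu_sq hn hμ
  have hμ0 : μ ≠ 0 := by rw [hμ]; exact pow_ne_zero _ (by norm_num)
  set C := ⅟(Delta n μ) * B with hCdef
  have hBDC : B = Delta n μ * C := by rw [hCdef, mul_invOf_cancel_left]
  have hBt : Bᵀ = -(B * Jmat n μ) := eq_neg_of_add_eq_zero_left (by rw [add_comm]; exact hB)
  have hfix : B = (Jmat n μ)ᵀ * B * Jmat n μ := by
    calc B = Bᵀᵀ := (Matrix.transpose_transpose B).symm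
      _ = (-(B * Jmat n μ))ᵀ := by rw [hBt]
      _ = -((Jmat n μ)ᵀ * Bᵀ) := by rw [Matrix.transpose_neg, Matrix.transpose_mul]
      _ = -((Jmat n μ)ᵀ * (-(B * Jmat n μ))) := by rw [← hBt]
      _ = (Jmat n μ)ᵀ * B * Jmat n μ := by rw [mul_neg, neg_neg, mul_assoc]
  have h1 : (Jmat n μ)ᵀ * Delta n μ = Delta n μ * ⅟(Jmat n μ) := by
    calc (Jmat n μ)ᵀ * Delta n μ
        = ((Jmat n μ)ᵀ * Delta n μ * Jmat n μ) * ⅟(Jmat n μ) := by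
          rw [mul_assoc, mul_invOf_self, mul_one]
      _ = Delta n μ * ⅟(Jmat n μ) := by rw [F2 hμ2]
  have h2 : Delta n μ * C = Delta n μ * (⅟(Jmat n μ) * C * Jmat n μ) := by
    calc Delta n μ * C = B := hBDC.symm
      _ = (Jmat n μ)ᵀ * B * Jmat n μ := hfix
      _ = (Jmat n μ)ᵀ * (Delta n μ * C) * Jmat n μ := by rw [← hBDC]
      _ = ((Jmat n μ)ᵀ * Delta n μ) * C * Jmat n μ := by simp only [mul_assoc]
      _ = Delta n μ * ⅟(Jmat n μ) * C * Jmat n μ := by rw [h1]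
      _ = Delta n μ * (⅟(Jmat n μ) * C * Jmat n μ) := by simp only [mul_assoc]
  have h3 : C = ⅟(Jmat n μ) * C * Jmat n μ := by
    have h4 := congrArg (fun M => ⅟(Delta n μ) * M) h2
    simpa only [invOf_mul_cancel_left] using h4
  have hJC : Jmat n μ * C = C * Jmat n μ := by
    calc Jmat n μ * C = Jmat n μ * (⅟(Jmat n μ) * C * Jmat n μ) := by rw [← h3]
      _ = (Jmat n μ * ⅟(Jmat n μ)) * C * Jmat n μ := by simp only [mul_assoc]
      _ = C * Jmat n μ := by rw [mul_invOf_self, one_mul]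
  have hNC : Jmat n 0 * C = C * Jmat n 0 := by
    have hN' : Jmat n 0 = Jmat n μ - μ • (1 : Matrix (Fin n) (Fin n) ℂ) := by
      rw [F0 μ]
      abel
    rw [hN', sub_mul, mul_sub, hJC, Matrix.smul_mul, Matrix.mul_smul, one_mul, mul_one]
  have hC := toeplitz hn hNC
  set c : Fin n → ℂ := fun k => C ⟨0, by omega⟩ k with hcdef
  have hrel : (∑ k : Fin n, c k • ((Jmat n 0) ^ (k : ℕ) * (Jmat n μ) ^ (1 : ℕ)))
      - (∑ k : Fin n, c k • (((-μ) ^ (k : ℕ))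
          • ((Jmat n 0) ^ (k : ℕ) * (Jmat n μ) ^ (n - (k : ℕ))))) = 0 := by
    have e1 : ⅟(Delta n μ) * (B * Jmat n μ)
        = ∑ k : Fin n, c k • ((Jmat n 0) ^ (k : ℕ) * (Jmat n μ) ^ (1 : ℕ)) := by
      rw [hBDC, mul_assoc, invOf_mul_cancel_left]
      conv_lhs => rw [hC]
      rw [Finset.sum_mul]
      exact Finset.sum_congr rfl fun k _ => by rw [Matrix.smul_mul, pow_one]
    have e2 : ⅟(Delta n μ) * Bᵀ
        = -∑ k : Fin n, c k • (((-μ) ^ (k : ℕ))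
            • ((Jmat n 0) ^ (k : ℕ) * (Jmat n μ) ^ (n - (k : ℕ)))) := by
      have hBt2 : Bᵀ = ∑ k : Fin n,
          c k • (Delta n μ * ((Jmat n 0) ^ (k : ℕ) * ((Jmat n μ) ^ (0 : ℕ))))ᵀ := by
        conv_lhs => rw [hBDC, hC]
        rw [Finset.mul_sum, Matrix.transpose_sum]
        refine Finset.sum_congr rfl fun k _ => by
          rw [Matrix.mul_smul, Matrix.transpose_smul, pow_zero, mul_one]
      rw [hBt2, Finset.mul_sum, ← Finset.sum_neg_distrib]
      refine Finset.sum_congr rfl fun k _ => ?_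
      rw [Tgen hn hμ (k : ℕ) 0 (by omega), show (0 : ℕ) + (k : ℕ) = (k : ℕ) by omega]
      rw [Matrix.mul_smul, Matrix.mul_neg, Matrix.mul_smul, invOf_mul_cancel_left]
      simp only [smul_neg, neg_smul]
    have h5 := congrArg (fun M => ⅟(Delta n μ) * M) hB
    simp only [Matrix.mul_add, mul_zero, e1, e2] at h5
    rw [← h5]
    abel
  have hall : ∀ jv : ℕ, (hjv : jv < n) → c ⟨jv, hjv⟩ = 0 := by
    intro jv
    induction jv using Nat.strong_induction_on with
    | _ jv ih =>
      intro hjv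
      rcases Nat.even_or_odd jv with hev | hod
      · obtain ⟨l, hl⟩ := hev
        have hje : (⟨jv, hjv⟩ : Fin n) = ⟨2 * l, by omega⟩ := Fin.ext (by simp; omega)
        rw [hcdef]
        simp only
        rw [hje]
        exact h0 l (by omega)
      · have hent := congrArg (fun M : Matrix (Fin n) (Fin n) ℂ
            => M ⟨0, by omega⟩ ⟨jv, hjv⟩) hrel
        simp only [Matrix.sub_apply, Matrix.sum_apply, Matrix.smul_apply, smul_eq_mul,
          Matrix.zero_apply] at hent
        rw [← Finset.sum_sub_distrib] at hent
        have hterm : ∀ e : ℕ, ∀ k : Fin n,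
            ((Jmat n 0) ^ (k : ℕ) * (Jmat n μ) ^ e) ⟨0, by omega⟩ ⟨jv, hjv⟩
              = if (k : ℕ) ≤ jv then μ ^ (e - (jv - (k : ℕ))) * ((e.choose (jv - (k : ℕ))) : ℂ)
                else 0 := by
          intro e k
          rw [Nmat_pow_mul_apply, dif_pos (by simpa using k.isLt), Jmat_pow_apply]
          simp
        rw [Finset.sum_eq_single (⟨jv, hjv⟩ : Fin n) (fun k _ hk => ?_)
          (fun hmem => absurd (Finset.mem_univ _) hmem)] at hent
        · rw [hterm 1, hterm (n - jv)] at hent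
          simp only [Fin.val_mk, le_refl, if_pos, Nat.sub_self] at hent
          have hval : μ ^ (1 - 0) * ((Nat.choose 1 0 : ℕ) : ℂ) = μ := by norm_num
          have hval2 : (-μ) ^ jv * (μ ^ (n - jv - 0) * ((Nat.choose (n - jv) 0 : ℕ) : ℂ))
              = -μ := by
            rw [Odd.neg_pow hod, Nat.choose_zero_right, Nat.sub_zero, Nat.cast_one, mul_one,
              neg_mul, ← pow_add, show jv + (n - jv) = n by omega, mu_pow_n hμ]
          rw [hval, hval2] at hent
          have h2μ : (2 : ℂ) * μ ≠ 0 := by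
            intro hc
            exact hμ0 (by linear_combination hc / 2)
          have : c ⟨jv, hjv⟩ * (2 * μ) = 0 := by linear_combination hent
          exact (mul_eq_zero.mp this).resolve_right h2μ
        · rcases Nat.lt_or_ge (k : ℕ) jv with hlt | hge
          · have hck : c k = 0 := by
              have h6 := ih (k : ℕ) hlt k.isLt
              rw [← h6]
            rw [hck]
            ring
          · have hgt : jv < (k : ℕ) := by
              rcases Nat.lt_or_ge jv (k : ℕ) with h' | h'
              · exact h'
              · exact absurd (Fin.ext (by simp only [Fin.val_mk]; omega)) hk
            rw [hterm 1, hterm (n - (k : ℕ)),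
              if_neg (show ¬((k : ℕ) ≤ jv) by omega), if_neg (show ¬((k : ℕ) ≤ jv) by omega)]
            ring
  have hC0 : C = 0 := by
    rw [hC]
    apply Finset.sum_eq_zero
    intro k _
    have h7 := hall (k : ℕ) k.isLt
    rw [Fin.eta] at h7
    rw [show C ⟨0, by omega⟩ k = c k from rfl, h7, zero_smul]
  rw [hBDC, hC0, mul_zero]

end Stmt14

open Stmt14 in
/-- the solutions `B` of `B·J_n(μ) + Bᵀ = 0` (with `μ = (-1)^n`) form a
complex subspace of dimension `⌈n/2⌉`. -/
theorem stmt_14 (n : ℕ) (hn : 1 ≤ n) (μ : ℂ) (hμ : μ = (-1) ^ n) :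
    ∃ S : Submodule ℂ (Matrix (Fin n) (Fin n) ℂ),
      (∀ B, B ∈ S ↔ B * Jmat n μ + Bᵀ = 0) ∧
      Module.finrank ℂ S = (n + 1) / 2 := by
  have hμ2 := mu_sq hn hμ
  have hμ0 : μ ≠ 0 := by rw [hμ]; exact pow_ne_zero _ (by norm_num)
  let f : Matrix (Fin n) (Fin n) ℂ →ₗ[ℂ] Matrix (Fin n) (Fin n) ℂ :=
    { toFun := fun B => B * Jmat n μ + Bᵀ
      map_add' := fun A B => by
        simp only [Matrix.add_mul, Matrix.transpose_add]
        abel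
      map_smul' := fun a B => by
        simp only [Matrix.smul_mul, Matrix.transpose_smul, smul_add, RingHom.id_apply] }
  refine ⟨LinearMap.ker f, fun B => Iff.rfl, ?_⟩
  haveI iD : Invertible (Delta n μ) := (Delta_isUnit hn hμ0).invertible
  haveI iJ : Invertible (Jmat n μ) := (Jmat_isUnit hμ0).invertible
  apply le_antisymm
  · -- upper bound
    have h2l : ∀ l : Fin ((n + 1) / 2), 2 * (l : ℕ) < n := fun l => by
      have := l.isLt
      omega
    let φ : (LinearMap.ker f) →ₗ[ℂ] (Fin ((n + 1) / 2) → ℂ) :=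
      { toFun := fun B l => (⅟(Delta n μ) * B.1) ⟨0, by omega⟩ ⟨2 * (l : ℕ), h2l l⟩
        map_add' := fun A B => by
          funext l
          simp [Matrix.mul_add, Matrix.add_apply]
        map_smul' := fun a B => by
          funext l
          simp [Matrix.mul_smul, Matrix.smul_apply] }
    have hinj : Function.Injective φ := by
      intro A B hAB
      apply Subtype.ext
      have hA : A.1 * Jmat n μ + A.1ᵀ = 0 := A.2
      have hB' : B.1 * Jmat n μ + B.1ᵀ = 0 := B.2
      have hsub : (A.1 - B.1) * Jmat n μ + (A.1 - B.1)ᵀ = 0 := by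
        rw [Matrix.sub_mul, Matrix.transpose_sub,
          show A.1 * Jmat n μ - B.1 * Jmat n μ + (A.1ᵀ - B.1ᵀ)
            = (A.1 * Jmat n μ + A.1ᵀ) - (B.1 * Jmat n μ + B.1ᵀ) by abel, hA, hB', sub_zero]
      have h0 : ∀ l : ℕ, (hl : l < (n + 1) / 2) →
          (⅟(Delta n μ) * (A.1 - B.1)) ⟨0, by omega⟩ ⟨2 * l, by omega⟩ = 0 := by
        intro l hl
        have h6 := congrFun hAB ⟨l, hl⟩
        simp only [φ, LinearMap.coe_mk, AddHom.coe_mk] at h6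
        rw [Matrix.mul_sub, Matrix.sub_apply]
        rw [sub_eq_zero]
        exact h6
      exact sub_eq_zero.mp (sol_zero hn hμ hsub h0)
    have hle := LinearMap.finrank_le_finrank_of_injective hinj
    rwa [Module.finrank_pi, Fintype.card_fin] at hle
  · -- lower bound
    let v : Fin ((n + 1) / 2) → Matrix (Fin n) (Fin n) ℂ :=
      fun k => Delta n μ * Pmat n μ (k : ℕ)
    have hvmem : ∀ k, v k ∈ LinearMap.ker f := fun k => by
      show (Delta n μ * Pmat n μ (k : ℕ)) * Jmat n μ + (Delta n μ * Pmat n μ (k : ℕ))ᵀ = 0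
      exact Pmem hn hμ (k : ℕ) k.isLt
    have hliv : LinearIndependent ℂ v := by
      rw [Fintype.linearIndependent_iff]
      intro g hg
      have hfac : Delta n μ * (∑ k, g k • Pmat n μ (k : ℕ)) = 0 := by
        rw [Finset.mul_sum, ← hg]
        exact Finset.sum_congr rfl fun k _ => by rw [Matrix.mul_smul]
      have hPsum : (∑ k : Fin ((n + 1) / 2), g k • Pmat n μ (k : ℕ)) = 0 := by
        have h5 := congrArg (fun M => ⅟(Delta n μ) * M) hfac
        simpa only [invOf_mul_cancel_left, mul_zero] using h5
      have hall : ∀ lv : ℕ, (hlv : lv < (n + 1) / 2) → g ⟨lv, hlv⟩ = 0 := by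
        intro lv
        induction lv using Nat.strong_induction_on with
        | _ lv ih =>
          intro hlv
          have hent := congrArg (fun M : Matrix (Fin n) (Fin n) ℂ =>
            M ⟨0, by omega⟩ ⟨2 * lv, by omega⟩) hPsum
          simp only [Matrix.sum_apply, Matrix.smul_apply, smul_eq_mul,
            Matrix.zero_apply] at hent
          rw [Finset.sum_eq_single (⟨lv, hlv⟩ : Fin ((n + 1) / 2)) (fun k _ hk => ?_)
            (fun hmem => absurd (Finset.mem_univ _) hmem)] at hent
          · exact (mul_eq_zero.mp hent).resolve_right (Pdiag_ne hn hμ lv hlv)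
          · rcases Nat.lt_or_ge (k : ℕ) lv with hlt | hge2
            · rw [show g k = 0 from by rw [← ih (k : ℕ) hlt k.isLt]]
              ring
            · have hgt : lv < (k : ℕ) := by
                rcases Nat.lt_or_ge lv (k : ℕ) with h' | h'
                · exact h'
                · exact absurd (Fin.ext (by simp only [Fin.val_mk]; omega)) hk
              rw [Pdiag0 (k : ℕ) lv k.isLt hlv hgt]
              ring
      intro k
      have h7 := hall (k : ℕ) k.isLt
      rwa [Fin.eta] at h7
    have hli : LinearIndependent ℂ (fun k => (⟨v k, hvmem k⟩ : LinearMap.ker f)) := by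
      apply LinearIndependent.of_comp (LinearMap.ker f).subtype
      exact hliv
    have hge := hli.fintype_card_le_finrank
    rwa [Fintype.card_fin] at hge
end
end

section
/- Let n ≥ 1 and let μ = (-1)^n. The set of 2n×2n complex matrices X satisfying X·H_{2n}(μ) + H_{2n}(μ)·Xᵀ = 0 is a complex vector subspace of the 2n×2n matrices of dimension n + 2·⌈n/2⌉. -/
open Matrix BigOperators Finset

noncomputable section

/-- auxiliary binomial convolution -/
def gfun (m i j : ℕ) : ℂ :=
  ∑ b ∈ Finset.range (m+1), (-1:ℂ)^b * ((m-b).choose i) * (b.choose j)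

lemma gfun_vanish {m i j : ℕ} (h : m < i + j) : gfun m i j = 0 := by
  unfold gfun
  apply Finset.sum_eq_zero
  intro b hb
  simp only [Finset.mem_range] at hb
  rcases lt_or_ge (m - b) i with h1 | h1
  · rw [Nat.choose_eq_zero_of_lt h1]; ring
  · have : b < j := by omega
    rw [Nat.choose_eq_zero_of_lt this]; ring

lemma gfun_corner (k : ℕ) : gfun k k 0 = 1 := by
  unfold gfun
  rw [Finset.sum_eq_single 0]
  · simp
  · intro b hb hb0
    have : k - b < k := by simp at hb; omega
    rw [Nat.choose_eq_zero_of_lt this]; ring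
  · simp

lemma gfun_symm (m i j : ℕ) : gfun m j i = (-1:ℂ)^m * gfun m i j := by
  unfold gfun
  rw [Finset.mul_sum]
  rw [← Finset.sum_range_reflect]
  apply Finset.sum_congr rfl
  intro b hb
  simp only [Finset.mem_range] at hb
  have hb' : b ≤ m := by omega
  have h1 : m + 1 - 1 - b = m - b := by omega
  rw [h1]
  have h2 : m - (m - b) = b := by omega
  rw [h2]
  have h4 : ((-1:ℂ)^b) * ((-1:ℂ)^b) = 1 := by
    rw [← pow_add, neg_one_pow_eq_one_iff_even (by norm_num : (-1:ℂ) ≠ 1)]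
    exact ⟨b, by ring⟩
  have h3 : (-1:ℂ)^(m-b) = (-1:ℂ)^m * (-1:ℂ)^b := by
    have h5 : (-1:ℂ)^(m-b) * (-1:ℂ)^b = (-1:ℂ)^m := by
      rw [← pow_add]; congr 1; omega
    calc (-1:ℂ)^(m-b) = (-1:ℂ)^(m-b) * (((-1:ℂ)^b) * ((-1:ℂ)^b)) := by rw [h4, mul_one]
    _ = ((-1:ℂ)^(m-b) * (-1:ℂ)^b) * (-1:ℂ)^b := by ring
    _ = (-1:ℂ)^m * (-1:ℂ)^b := by rw [h5]
  rw [h3]; ring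

lemma gfun_pascal (m i j : ℕ) :
    gfun (m+1) (i+1) j = gfun m (i+1) j + gfun m i j := by
  unfold gfun
  rw [Finset.sum_range_succ]
  have hlast : (-1:ℂ)^(m+1) * (((m+1)-(m+1)).choose (i+1)) * ((m+1).choose j)= 0 := by
    simp [Nat.choose_eq_zero_of_lt (Nat.succ_pos i)]
  rw [hlast, add_zero, ← Finset.sum_add_distrib]
  apply Finset.sum_congr rfl
  intro b hb
  simp only [Finset.mem_range] at hb
  have : m + 1 - b = (m - b) + 1 := by omega
  rw [this, Nat.choose_succ_succ]
  push_cast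
  ring

/-- coefficient function of the distinguished solution of `C + J_k₊₁(ν) Cᵀ = 0`. -/
def cFun (k : ℕ) (ν : ℂ) (i j : ℕ) : ℂ :=
  2^(i+j) * (ν^(k+i+j) * gfun k i j
    + ν^(k+1+i+j) * (if k = 0 then 0 else gfun (k-1) j i))

lemma cFun_vanish {k i j : ℕ} (ν : ℂ) (h : k < i + j) : cFun k ν i j = 0 := by
  unfold cFun
  rcases Nat.eq_zero_or_pos k with hk | hk
  · subst hk; simp [gfun_vanish h]
  · rw [if_neg (by omega), gfun_vanish h, gfun_vanish (by omega : k-1 < j+i)]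
    ring

lemma cFun_corner {k : ℕ} {ν : ℂ} (hν : ν = 1 ∨ ν = -1) :
    cFun k ν k 0 = 2^k := by
  have hνν : ν * ν = 1 := by rcases hν with h | h <;> subst h <;> norm_num
  unfold cFun
  have h2 : (if k = 0 then (0:ℂ) else gfun (k-1) 0 k) = 0 := by
    rcases Nat.eq_zero_or_pos k with hk | hk
    · simp [hk]
    · rw [if_neg (by omega)]; exact gfun_vanish (by omega)
  rw [h2, gfun_corner, mul_zero, add_zero, mul_one]
  have h3 : ν ^ (k + k + 0) = 1 := by
    have : ν ^ (k+k+0) = (ν*ν)^k := by rw [mul_pow, ← pow_add]; ring_nf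
    rw [this, hνν, one_pow]
  rw [h3]; ring

lemma cFun_rec {k : ℕ} {ν : ℂ} (hν : ν = (-1:ℂ)^(k+1)) (i j : ℕ) :
    cFun k ν i j + ν * cFun k ν j i + cFun k ν j (i+1) = 0 := by
  have hν1 : ν = 1 ∨ ν = -1 := by
    subst hν
    rcases Nat.even_or_odd (k+1) with h | h
    · left; exact h.neg_one_pow
    · right; exact h.neg_one_pow
  have hk : (-1:ℂ)^k = -ν := by
    subst hν; rw [pow_succ]; ring
  rcases k with _ | m
  · -- k = 0
    unfold cFun
    simp only [if_pos rfl, mul_zero, add_zero]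
    have hg1 : gfun 0 j (i+1) = 0 := by
      unfold gfun
      simp [Nat.choose_eq_zero_of_lt (Nat.succ_pos i)]
    rw [hg1]
    have hg2 : gfun 0 j i = (-1:ℂ)^0 * gfun 0 i j := gfun_symm 0 i j
    simp only [pow_zero, one_mul] at hg2
    rw [hg2]
    have hνm : ν = -1 := by simpa using hν
    subst hνm
    have e1 : ((-1:ℂ))^(0+j+i) = (-1:ℂ)^(0+i+j) := by congr 1; omega
    rw [e1]
    simp
    ring
  · -- k = m+1
    set k := m + 1 with hkdef
    unfold cFun
    rw [if_neg (by omega : ¬ (k = 0)), if_neg (by omega : ¬ (k = 0)),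
      if_neg (by omega : ¬ (k = 0))]
    have hsub : k - 1 = m := rfl
    rw [hsub]
    -- symmetry rewrites
    rw [gfun_symm k i j, gfun_symm m i j,
      show gfun k j (i+1) = (-1:ℂ)^k * gfun k (i+1) j from gfun_symm k (i+1) j,
      show gfun k (i+1) j = gfun m (i+1) j + gfun m i j from gfun_pascal m i j,
      hk]
    have hm : (-1:ℂ)^m = ν := by
      rw [hν]; rw [pow_succ, pow_succ]; ring
    rw [hm]
    rcases hν1 with h | h <;> subst h <;> ring

variable {n : ℕ}

lemma Jmat_apply (ν : ℂ) (i j : Fin n) :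
    Jmat n ν i j = (if i = j then ν else 0) + (if (j:ℕ) = (i:ℕ)+1 then 1 else 0) := by
  show (if i = j then ν else if (j : ℕ) = (i : ℕ) + 1 then 1 else 0) = _
  by_cases h1 : i = j
  · have : ¬ ((j:ℕ) = (i:ℕ)+1) := by subst h1; omega
    simp [h1, this]
  · simp [h1]

lemma Jmat_mul_apply (ν : ℂ) (M : Matrix (Fin n) (Fin n) ℂ) (i j : Fin n) :
    (Jmat n ν * M) i j
      = ν * M i j + (if h : (i:ℕ)+1 < n then M ⟨(i:ℕ)+1, h⟩ j else 0) := by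
  rw [Matrix.mul_apply]
  have step : ∀ t : Fin n, Jmat n ν i t * M t j
      = (if i = t then ν * M t j else 0) + (if (t:ℕ) = (i:ℕ)+1 then M t j else 0) := by
    intro t
    rw [Jmat_apply]
    by_cases h1 : i = t
    · have : ¬ ((t:ℕ) = (i:ℕ)+1) := by subst h1; omega
      simp [h1, this]
    · simp [h1]
  rw [Finset.sum_congr rfl (fun t _ => step t), Finset.sum_add_distrib]
  congr 1
  · rw [Finset.sum_ite_eq]; simp
  · by_cases h : (i:ℕ)+1 < n
    · rw [dif_pos h, Finset.sum_eq_single (⟨(i:ℕ)+1, h⟩ : Fin n)]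
      · simp
      · intro t _ ht
        have : ¬ ((t:ℕ) = (i:ℕ)+1) := by
          intro hc; apply ht; apply Fin.ext; simp [hc]
        simp [this]
      · simp
    · rw [dif_neg h]
      apply Finset.sum_eq_zero
      intro t _
      have : ¬ ((t:ℕ) = (i:ℕ)+1) := by omega
      simp [this]

lemma Rev_mul_apply (M : Matrix (Fin n) (Fin n) ℂ) (i : Fin n) (j : Fin n) :
    (Rev n * M) i j = M i.rev j := by
  rw [Matrix.mul_apply]
  have step : ∀ t : Fin n, Rev n i t * M t j = if t = i.rev then M t j else 0 := by
    intro t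
    show (if t = i.rev then (1:ℂ) else 0) * M t j = _
    by_cases h : t = i.rev <;> simp [h]
  rw [Finset.sum_congr rfl (fun t _ => step t), Finset.sum_ite_eq']
  simp

lemma mul_Rev_apply (M : Matrix (Fin n) (Fin n) ℂ) (i : Fin n) (j : Fin n) :
    (M * Rev n) i j = M i j.rev := by
  rw [Matrix.mul_apply]
  have step : ∀ t : Fin n, M i t * Rev n t j = if t = j.rev then M i t else 0 := by
    intro t
    show M i t * (if j = t.rev then (1:ℂ) else 0) = _
    have : (j = t.rev) ↔ (t = j.rev) := by
      rw [eq_comm, Fin.rev_eq_iff, eq_comm]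
    by_cases h : t = j.rev
    · rw [if_pos (this.mpr h), if_pos h, mul_one]
    · rw [if_neg (fun hc => h (this.mp hc)), if_neg h, mul_zero]
  rw [Finset.sum_congr rfl (fun t _ => step t), Finset.sum_ite_eq']
  simp

lemma Rev_transpose : (Rev n)ᵀ = Rev n := by
  ext i j
  show (if i = j.rev then (1:ℂ) else 0) = if j = i.rev then 1 else 0
  have : (i = j.rev) ↔ (j = i.rev) := by
    rw [eq_comm, Fin.rev_eq_iff]
  by_cases h : i = j.rev
  · rw [if_pos h, if_pos (this.mp h)]
  · rw [if_neg h, if_neg (fun hc => h (this.mpr hc))]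

lemma Rev_mul_Rev : Rev n * Rev n = 1 := by
  ext i j
  rw [Rev_mul_apply]
  show (if j = i.rev.rev then (1:ℂ) else 0) = _
  simp [Fin.rev_rev, Matrix.one_apply, eq_comm]

lemma Rev_mul_Jmat_mul_Rev (ν : ℂ) : Rev n * Jmat n ν * Rev n = (Jmat n ν)ᵀ := by
  ext i j
  rw [mul_Rev_apply, Rev_mul_apply]
  show (if i.rev = j.rev then ν else if ((j.rev:Fin n):ℕ) = ((i.rev:Fin n):ℕ)+1 then 1 else 0)
      = (if j = i then ν else if ((i:ℕ)) = (j:ℕ)+1 then 1 else 0)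
  have h1 : (i.rev = j.rev) ↔ (j = i) := by
    constructor
    · intro h; have := congrArg Fin.rev h; simpa [Fin.rev_rev, eq_comm] using this
    · intro h; rw [h]
  have hv : ∀ a : Fin n, ((a.rev : Fin n) : ℕ) = n - 1 - (a:ℕ) := by
    intro a; rw [Fin.val_rev]; omega
  by_cases h : j = i
  · rw [if_pos (h1.mpr h), if_pos h]
  · rw [if_neg (fun hc => h (h1.mp hc)), if_neg h]
    have hi := i.isLt; have hj := j.isLt
    have h2 : (((j.rev:Fin n):ℕ) = ((i.rev:Fin n):ℕ)+1) ↔ ((i:ℕ) = (j:ℕ)+1) := by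
      rw [hv i, hv j]; omega
    by_cases h3 : (i:ℕ) = (j:ℕ)+1
    · rw [if_pos (h2.mpr h3), if_pos h3]
    · rw [if_neg (fun hc => h3 (h2.mp hc)), if_neg h3]

lemma Jmat_det (ν : ℂ) : (Jmat n ν).det = ν ^ n := by
  have h : (Jmat n ν).BlockTriangular id := by
    intro i j hij
    show (if i = j then ν else if (j:ℕ) = (i:ℕ)+1 then 1 else 0) = 0
    have h1 : ¬ (i = j) := by intro hc; subst hc; exact absurd hij (lt_irrefl _)
    have h2 : ¬ ((j:ℕ) = (i:ℕ)+1) := by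
      have : (j:ℕ) < (i:ℕ) := hij
      omega
    simp [h1, h2]
  rw [Matrix.det_of_upperTriangular h]
  simp [Jmat]

lemma Jmat_isUnit {ν : ℂ} (hν : ν ≠ 0) : IsUnit (Jmat n ν) := by
  rw [Matrix.isUnit_iff_isUnit_det, Jmat_det]
  exact (pow_ne_zero n hν).isUnit

lemma isUnit_mulVec_inj {A : Matrix (Fin n) (Fin n) ℂ} (hA : IsUnit A) :
    Function.Injective (A.mulVec) := by
  intro x y hxy
  have hd : IsUnit A.det := (Matrix.isUnit_iff_isUnit_det A).mp hA
  have : A⁻¹ *ᵥ (A *ᵥ x) = A⁻¹ *ᵥ (A *ᵥ y) := by rw [hxy]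
  rwa [Matrix.mulVec_mulVec, Matrix.mulVec_mulVec, Matrix.nonsing_inv_mul A hd,
    Matrix.one_mulVec, Matrix.one_mulVec] at this

/-- solution space of `C + J Cᵀ = 0`. -/
def SCgen (n : ℕ) (ν : ℂ) : Submodule ℂ (Matrix (Fin n) (Fin n) ℂ) where
  carrier := {C | C + Jmat n ν * Cᵀ = 0}
  zero_mem' := by simp
  add_mem' := by
    intro a b ha hb
    simp only [Set.mem_setOf_eq] at *
    rw [transpose_add, mul_add]
    calc a + b + (Jmat n ν * aᵀ + Jmat n ν * bᵀ)
        = (a + Jmat n ν * aᵀ) + (b + Jmat n ν * bᵀ) := by abel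
      _ = 0 := by rw [ha, hb]; simp
  smul_mem' := by
    intro c a ha
    simp only [Set.mem_setOf_eq] at *
    rw [transpose_smul, Matrix.mul_smul, ← smul_add, ha, smul_zero]

lemma mem_SCgen_iff {ν : ℂ} {C : Matrix (Fin n) (Fin n) ℂ} :
    C ∈ SCgen n ν ↔ C + Jmat n ν * Cᵀ = 0 := Iff.rfl

def cMat (n m : ℕ) (ν : ℂ) : Matrix (Fin n) (Fin n) ℂ :=
  Matrix.of fun i j => cFun (m-1) ν (i:ℕ) (j:ℕ)

lemma cMat_mem {m : ℕ} {ν : ℂ} (hm1 : 1 ≤ m) (hmn : m ≤ n) (hν : ν = (-1:ℂ)^m) :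
    cMat n m ν ∈ SCgen n ν := by
  rw [mem_SCgen_iff]
  ext i j
  rw [Matrix.add_apply, Jmat_mul_apply, Matrix.zero_apply]
  have hν' : ν = (-1:ℂ)^((m-1)+1) := by rw [hν]; congr 1; omega
  have hrec := cFun_rec hν' (i:ℕ) (j:ℕ)
  show cFun (m-1) ν i j + (ν * cFun (m-1) ν j i +
      (if h : (i:ℕ)+1 < n then (cMat n m ν)ᵀ ⟨(i:ℕ)+1, h⟩ j else 0)) = 0
  by_cases h : (i:ℕ)+1 < n
  · rw [dif_pos h]
    show cFun (m-1) ν i j + (ν * cFun (m-1) ν j i + cFun (m-1) ν (j:ℕ) ((i:ℕ)+1)) = 0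
    linear_combination hrec
  · rw [dif_neg h]
    have hz : cFun (m-1) ν (j:ℕ) ((i:ℕ)+1) = 0 := by
      apply cFun_vanish
      have := i.isLt
      omega
    rw [hz] at hrec
    linear_combination hrec

lemma neg_one_pow_sub_two_mul (a b : ℕ) (h : 2*b ≤ a) :
    (-1:ℂ)^(a - 2*b) = (-1:ℂ)^a := by
  have h1 : (-1:ℂ)^(a - 2*b) * (-1:ℂ)^(2*b) = (-1:ℂ)^a := by
    rw [← pow_add]; congr 1; omega
  have h2 : (-1:ℂ)^(2*b) = 1 := by
    rw [pow_mul]; norm_num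
  rw [h2, mul_one] at h1
  exact h1

lemma SCgen_lower (ν : ℂ) (M p : ℕ) (hM : M ≤ n) (hp : 2*p ≤ M+1)
    (hν : ν = (-1:ℂ)^M) : p ≤ Module.finrank ℂ (SCgen n ν) := by
  rcases Nat.eq_zero_or_pos p with hp0 | hp0
  · omega
  have hM1 : 1 ≤ M := by omega
  have hn1 : 1 ≤ n := by omega
  have hν1 : ν = 1 ∨ ν = -1 := by
    subst hν
    rcases Nat.even_or_odd M with h | h
    · left; exact h.neg_one_pow
    · right; exact h.neg_one_pow
  -- sizes
  have hmsize : ∀ t : Fin p, 1 ≤ M - 2*(t:ℕ) ∧ M - 2*(t:ℕ) ≤ n := by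
    intro t; have := t.isLt; omega
  have hνm : ∀ t : Fin p, ν = (-1:ℂ)^(M - 2*(t:ℕ)) := by
    intro t
    rw [neg_one_pow_sub_two_mul _ _ (by have := t.isLt; omega), hν]
  set row : Fin p → Fin n := fun t => ⟨M - 2*(t:ℕ) - 1, by have := t.isLt; omega⟩ with hrow
  set col0 : Fin n := ⟨0, by omega⟩ with hcol0
  set A : Matrix (Fin p) (Fin p) ℂ :=
    Matrix.of (fun t s => cMat n (M - 2*(s:ℕ)) ν (row t) col0) with hA
  have hA_tri : A.BlockTriangular OrderDual.toDual := by
    intro t s hts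
    have hts' : (t:ℕ) < (s:ℕ) := hts
    show cFun (M - 2*(s:ℕ) - 1) ν ((row t : Fin n):ℕ) ((col0:ℕ)) = 0
    apply cFun_vanish
    show M - 2*(s:ℕ) - 1 < (M - 2*(t:ℕ) - 1) + 0
    have := s.isLt
    omega
  have hA_diag : ∀ t, A t t = 2^(M - 2*(t:ℕ) - 1) := by
    intro t
    show cFun (M - 2*(t:ℕ) - 1) ν ((row t : Fin n):ℕ) ((col0:ℕ)) = _
    show cFun (M - 2*(t:ℕ) - 1) ν (M - 2*(t:ℕ) - 1) 0 = _
    exact cFun_corner hν1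
  have hAdet : IsUnit A.det := by
    rw [Matrix.det_of_lowerTriangular A hA_tri, isUnit_iff_ne_zero]
    apply Finset.prod_ne_zero_iff.mpr
    intro t _
    rw [hA_diag t]
    exact pow_ne_zero _ (by norm_num : (2:ℂ) ≠ 0)
  have hAunit : IsUnit A := (Matrix.isUnit_iff_isUnit_det A).mpr hAdet
  -- the evaluation map
  set Θ : Matrix (Fin n) (Fin n) ℂ →ₗ[ℂ] (Fin p → ℂ) :=
    { toFun := fun C t => C (row t) col0
      map_add' := by intro x y; funext t; simp
      map_smul' := by intro c x; funext t; simp } with hΘ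
  set f : (SCgen n ν) →ₗ[ℂ] (Fin p → ℂ) := Θ.comp (SCgen n ν).subtype with hf
  have hsurj : Function.Surjective f := by
    intro y
    set x : Fin p → ℂ := A⁻¹ *ᵥ y with hx
    have hmem : (∑ t : Fin p, x t • cMat n (M - 2*(t:ℕ)) ν) ∈ SCgen n ν := by
      apply Submodule.sum_mem
      intro t _
      exact Submodule.smul_mem _ _ (cMat_mem (hmsize t).1 (hmsize t).2 (hνm t))
    refine ⟨⟨_, hmem⟩, ?_⟩
    funext u
    show Θ (∑ t : Fin p, x t • cMat n (M - 2*(t:ℕ)) ν) u = y u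
    rw [map_sum]
    have : (∑ t : Fin p, Θ (x t • cMat n (M - 2*(t:ℕ)) ν)) u
        = ∑ t : Fin p, A u t * x t := by
      rw [Finset.sum_apply]
      apply Finset.sum_congr rfl
      intro t _
      show (x t • cMat n (M - 2*(t:ℕ)) ν) (row u) col0 = A u t * x t
      rw [Matrix.smul_apply]
      show x t • (A u t) = _
      rw [smul_eq_mul]; ring
    rw [this]
    have : ∑ t : Fin p, A u t * x t = (A *ᵥ x) u := rfl
    rw [this, hx, Matrix.mulVec_mulVec, Matrix.mul_nonsing_inv A hAdet,
      Matrix.one_mulVec]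
  have : Module.finrank ℂ (Fin p → ℂ) ≤ Module.finrank ℂ (SCgen n ν) := by
    have h1 := LinearMap.finrank_range_le f
    rw [LinearMap.range_eq_top_of_surjective f hsurj] at h1
    simpa using h1
  rwa [Module.finrank_fin_fun] at this

def Vmod (n : ℕ) (ν : ℂ) : Submodule ℂ (Matrix (Fin n) (Fin n) ℂ) where
  carrier := {C | Jmat n ν * C * (Jmat n ν)ᵀ = C}
  zero_mem' := by simp
  add_mem' := by
    intro a b ha hb
    simp only [Set.mem_setOf_eq] at *
    rw [mul_add, add_mul, ha, hb]
  smul_mem' := by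
    intro c a ha
    simp only [Set.mem_setOf_eq] at *
    rw [Matrix.mul_smul, Matrix.smul_mul, ha]

def SCgen' (n : ℕ) (ν : ℂ) : Submodule ℂ (Matrix (Fin n) (Fin n) ℂ) where
  carrier := {C | C - Jmat n ν * Cᵀ = 0}
  zero_mem' := by simp
  add_mem' := by
    intro a b ha hb
    simp only [Set.mem_setOf_eq] at *
    rw [transpose_add, mul_add]
    calc a + b - (Jmat n ν * aᵀ + Jmat n ν * bᵀ)
        = (a - Jmat n ν * aᵀ) + (b - Jmat n ν * bᵀ) := by abel
      _ = 0 := by rw [ha, hb]; simp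
  smul_mem' := by
    intro c a ha
    simp only [Set.mem_setOf_eq] at *
    rw [transpose_smul, Matrix.mul_smul, ← smul_sub, ha, smul_zero]

lemma mem_Vmod_iff {ν : ℂ} {C : Matrix (Fin n) (Fin n) ℂ} :
    C ∈ Vmod n ν ↔ Jmat n ν * C * (Jmat n ν)ᵀ = C := Iff.rfl

lemma mem_SCgen'_iff {ν : ℂ} {C : Matrix (Fin n) (Fin n) ℂ} :
    C ∈ SCgen' n ν ↔ C - Jmat n ν * Cᵀ = 0 := Iff.rfl

lemma JT_mulVec_single (ν : ℂ) (j : Fin n) :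
    (Jmat n ν)ᵀ *ᵥ Pi.single j (1:ℂ)
      = ν • (Pi.single j 1 : Fin n → ℂ)
        + (if h : (j:ℕ)+1 < n then (Pi.single ⟨(j:ℕ)+1,h⟩ 1 : Fin n → ℂ) else 0) := by
  funext i
  rw [Matrix.mulVec_single]
  show (Jmat n ν) j i * 1 = _
  rw [Jmat_apply, mul_one, Pi.add_apply, Pi.smul_apply, smul_eq_mul, Pi.single_apply]
  have hd : (if h : (j:ℕ)+1 < n then (Pi.single ⟨(j:ℕ)+1,h⟩ 1 : Fin n → ℂ) else 0) i
      = if (i:ℕ) = (j:ℕ)+1 then 1 else 0 := by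
    by_cases h : (j:ℕ)+1 < n
    · rw [dif_pos h, Pi.single_apply]
      have : (i = (⟨(j:ℕ)+1,h⟩ : Fin n)) ↔ ((i:ℕ) = (j:ℕ)+1) := by
        rw [Fin.ext_iff]
      by_cases h2 : (i:ℕ) = (j:ℕ)+1
      · rw [if_pos h2, if_pos (this.mpr h2)]
      · rw [if_neg h2, if_neg (fun hc => h2 (this.mp hc))]
    · rw [dif_neg h]
      have h2 : ¬ ((i:ℕ) = (j:ℕ)+1) := by have := i.isLt; omega
      rw [if_neg h2]
      rfl
  rw [hd]
  by_cases h1 : j = i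
  · cases h1
    have h2 : ¬ ((j:ℕ) = (j:ℕ)+1) := by omega
    rw [if_pos rfl, if_pos rfl, if_neg h2, mul_one]
  · have h1' : ¬ (i = j) := fun hc => h1 hc.symm
    rw [if_neg h1, if_neg h1', mul_zero, zero_add]

lemma JT_span_top (hn : 1 ≤ n) (ν : ℂ) :
    Submodule.span ℂ (Set.range fun t : ℕ =>
      ((Jmat n ν)ᵀ)^t *ᵥ Pi.single (⟨0, hn⟩ : Fin n) (1:ℂ)) = ⊤ := by
  set e0 : Fin n → ℂ := Pi.single (⟨0, hn⟩ : Fin n) (1:ℂ) with he0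
  set W := Submodule.span ℂ (Set.range fun t : ℕ => ((Jmat n ν)ᵀ)^t *ᵥ e0) with hW
  have hstable : ∀ w ∈ W, (Jmat n ν)ᵀ *ᵥ w ∈ W := by
    intro w hw
    induction hw using Submodule.span_induction with
    | mem x hx =>
        obtain ⟨t, rfl⟩ := hx
        rw [Matrix.mulVec_mulVec, ← pow_succ']
        exact Submodule.subset_span ⟨t+1, rfl⟩
    | zero => rw [Matrix.mulVec_zero]; exact Submodule.zero_mem _
    | add x y _ _ hx hy => rw [Matrix.mulVec_add]; exact Submodule.add_mem _ hx hy
    | smul c x _ hx => rw [Matrix.mulVec_smul]; exact Submodule.smul_mem _ _ hx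
  have hsingle : ∀ d (h : d < n), (Pi.single (⟨d, h⟩ : Fin n) 1 : Fin n → ℂ) ∈ W := by
    intro d
    induction d with
    | zero =>
        intro h
        have : (Pi.single (⟨0,h⟩ : Fin n) 1 : Fin n → ℂ) = ((Jmat n ν)ᵀ)^0 *ᵥ e0 := by
          rw [pow_zero, Matrix.one_mulVec]
        rw [this]
        exact Submodule.subset_span ⟨0, rfl⟩
    | succ d ih =>
        intro h
        have hd : d < n := by omega
        have hkey := JT_mulVec_single (n := n) ν ⟨d, hd⟩
        rw [dif_pos (show d+1 < n from h)] at hkey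
        have : (Pi.single (⟨d+1, h⟩ : Fin n) 1 : Fin n → ℂ)
            = (Jmat n ν)ᵀ *ᵥ (Pi.single (⟨d,hd⟩ : Fin n) 1 : Fin n → ℂ)
              - ν • (Pi.single (⟨d,hd⟩ : Fin n) 1 : Fin n → ℂ) := by
          rw [hkey]; abel
        rw [this]
        exact Submodule.sub_mem _ (hstable _ (ih hd)) (Submodule.smul_mem _ _ (ih hd))
  rw [eq_top_iff]
  intro y _
  have hy : y = ∑ i : Fin n, y i • (Pi.single i 1 : Fin n → ℂ) := by
    funext j
    rw [Finset.sum_apply]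
    simp [Pi.single_apply, eq_comm]
  rw [hy]
  apply Submodule.sum_mem
  intro i _
  exact Submodule.smul_mem _ _ (hsingle (i:ℕ) i.isLt)

lemma Vmod_finrank_le (hn : 1 ≤ n) {ν : ℂ} (hν0 : ν ≠ 0) :
    Module.finrank ℂ (Vmod n ν) ≤ n := by
  set e0 : Fin n → ℂ := Pi.single (⟨0, hn⟩ : Fin n) (1:ℂ) with he0
  set ev : (Vmod n ν) →ₗ[ℂ] (Fin n → ℂ) :=
    { toFun := fun C => (C : Matrix (Fin n) (Fin n) ℂ) *ᵥ e0
      map_add' := by intro x y; simp [Matrix.add_mulVec]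
      map_smul' := by intro c x; simp [Matrix.smul_mulVec] } with hev
  have hinj : Function.Injective ev := by
    rw [← LinearMap.ker_eq_bot]
    rw [Submodule.eq_bot_iff]
    rintro ⟨C, hC⟩ hker
    have hC' : Jmat n ν * C * (Jmat n ν)ᵀ = C := hC
    have h0 : C *ᵥ e0 = 0 := hker
    have hJu : IsUnit (Jmat n ν) := Jmat_isUnit hν0
    have hpowc : ∀ t : ℕ, (Jmat n ν)^t * C * ((Jmat n ν)ᵀ)^t = C := by
      intro t
      induction t with
      | zero => simp
      | succ t ih =>
          rw [pow_succ', pow_succ]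
          calc Jmat n ν * (Jmat n ν)^t * C * (((Jmat n ν)ᵀ)^t * (Jmat n ν)ᵀ)
              = Jmat n ν * ((Jmat n ν)^t * C * ((Jmat n ν)ᵀ)^t) * (Jmat n ν)ᵀ := by
                noncomm_ring
            _ = Jmat n ν * C * (Jmat n ν)ᵀ := by rw [ih]
            _ = C := hC'
    have hz : ∀ t : ℕ, C *ᵥ (((Jmat n ν)ᵀ)^t *ᵥ e0) = 0 := by
      intro t
      apply isUnit_mulVec_inj (hJu.pow t)
      rw [Matrix.mulVec_mulVec, Matrix.mulVec_mulVec, hpowc t, h0, Matrix.mulVec_zero]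
    have hall : ∀ y : Fin n → ℂ, C *ᵥ y = 0 := by
      intro y
      have hy : y ∈ Submodule.span ℂ (Set.range fun t : ℕ => ((Jmat n ν)ᵀ)^t *ᵥ e0) := by
        rw [JT_span_top hn ν]; trivial
      induction hy using Submodule.span_induction with
      | mem x hx => obtain ⟨t, rfl⟩ := hx; exact hz t
      | zero => exact Matrix.mulVec_zero C
      | add x y _ _ hx hy => rw [Matrix.mulVec_add, hx, hy, add_zero]
      | smul c x _ hx => rw [Matrix.mulVec_smul, hx, smul_zero]
    have : C = 0 := by
      ext i j
      have := congrFun (hall (Pi.single j 1)) i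
      rw [Matrix.mulVec_single] at this
      simpa using this
    exact Subtype.ext this
  calc Module.finrank ℂ (Vmod n ν) ≤ Module.finrank ℂ (Fin n → ℂ) :=
        LinearMap.finrank_le_finrank_of_injective hinj
    _ = n := Module.finrank_fin_fun ℂ

def Dsign (n : ℕ) : Matrix (Fin n) (Fin n) ℂ :=
  Matrix.diagonal fun i : Fin n => (-1:ℂ)^(i:ℕ)

lemma Dsign_mul_Dsign : Dsign n * Dsign n = 1 := by
  rw [Dsign, Matrix.diagonal_mul_diagonal]
  have : (fun i : Fin n => (-1:ℂ)^(i:ℕ) * (-1:ℂ)^(i:ℕ)) = fun _ => 1 := by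
    funext i
    rw [← pow_add, ← two_mul, pow_mul]
    norm_num
  rw [this, Matrix.diagonal_one]

lemma Dsign_transpose : (Dsign n)ᵀ = Dsign n := Matrix.diagonal_transpose _

lemma Dsign_Jmat (ν : ℂ) : Dsign n * Jmat n ν * Dsign n = -(Jmat n (-ν)) := by
  ext i j
  have hl : (Dsign n * Jmat n ν * Dsign n) i j
      = (-1:ℂ)^(i:ℕ) * Jmat n ν i j * (-1:ℂ)^(j:ℕ) := by
    rw [Dsign, Matrix.mul_diagonal, Matrix.diagonal_mul]
  rw [hl, Jmat_apply, Matrix.neg_apply, Jmat_apply]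
  have hp : (-1:ℂ)^(i:ℕ) * (-1:ℂ)^(i:ℕ) = 1 := by
    rw [← pow_add, ← two_mul, pow_mul]; norm_num
  by_cases h1 : i = j
  · cases h1
    have h2 : ¬ ((i:ℕ) = (i:ℕ)+1) := by omega
    rw [if_pos rfl, if_pos rfl, if_neg h2]
    linear_combination ν * hp
  · rw [if_neg h1, if_neg h1]
    by_cases h2 : (j:ℕ) = (i:ℕ)+1
    · rw [if_pos h2, h2, pow_succ]
      linear_combination (-1:ℂ) * hp
    · rw [if_neg h2]
      ring

lemma SCgen_le_Vmod (ν : ℂ) : SCgen n ν ≤ Vmod n ν := by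
  intro C hC
  rw [mem_SCgen_iff] at hC
  rw [mem_Vmod_iff]
  have h1 : Jmat n ν * Cᵀ = -C := eq_neg_of_add_eq_zero_right hC
  have h2 : Cᵀ + C * (Jmat n ν)ᵀ = 0 := by
    have := congrArg Matrix.transpose hC
    simpa [Matrix.transpose_add, Matrix.transpose_mul] using this
  have h3 : C * (Jmat n ν)ᵀ = -Cᵀ := by
    have := eq_neg_of_add_eq_zero_right h2
    rw [this]
  calc Jmat n ν * C * (Jmat n ν)ᵀ = Jmat n ν * (C * (Jmat n ν)ᵀ) := by rw [mul_assoc]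
    _ = Jmat n ν * (-Cᵀ) := by rw [h3]
    _ = -(Jmat n ν * Cᵀ) := by noncomm_ring
    _ = C := by rw [h1, neg_neg]

lemma SCgen'_le_Vmod (ν : ℂ) : SCgen' n ν ≤ Vmod n ν := by
  intro C hC
  rw [mem_SCgen'_iff] at hC
  rw [mem_Vmod_iff]
  have h1 : Jmat n ν * Cᵀ = C := (sub_eq_zero.mp hC).symm
  have h2 : Cᵀ - C * (Jmat n ν)ᵀ = 0 := by
    have := congrArg Matrix.transpose hC
    simpa [Matrix.transpose_sub, Matrix.transpose_mul] using this
  have h3 : C * (Jmat n ν)ᵀ = Cᵀ := (sub_eq_zero.mp h2).symm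
  calc Jmat n ν * C * (Jmat n ν)ᵀ = Jmat n ν * (C * (Jmat n ν)ᵀ) := by rw [mul_assoc]
    _ = Jmat n ν * Cᵀ := by rw [h3]
    _ = C := h1

lemma SCgen_inf_SCgen' (ν : ℂ) : SCgen n ν ⊓ SCgen' n ν = ⊥ := by
  rw [eq_bot_iff]
  intro C hC
  rw [Submodule.mem_inf] at hC
  obtain ⟨h1, h2⟩ := hC
  rw [Submodule.mem_bot]
  rw [mem_SCgen_iff] at h1
  rw [mem_SCgen'_iff] at h2
  have : C + C = 0 := by
    calc C + C = (C + Jmat n ν * Cᵀ) + (C - Jmat n ν * Cᵀ) := by abel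
      _ = 0 := by rw [h1, h2, add_zero]
  have h3 : (2:ℂ) • C = 0 := by
    rw [two_smul]; exact this
  have := smul_eq_zero.mp h3
  rcases this with h | h
  · norm_num at h
  · exact h

/-- conjugation by the sign matrix -/
def signConj (n : ℕ) : Matrix (Fin n) (Fin n) ℂ ≃ₗ[ℂ] Matrix (Fin n) (Fin n) ℂ where
  toFun X := Dsign n * X * Dsign n
  invFun X := Dsign n * X * Dsign n
  left_inv := by
    intro X
    calc Dsign n * (Dsign n * X * Dsign n) * Dsign n
        = (Dsign n * Dsign n) * X * (Dsign n * Dsign n) := by noncomm_ring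
      _ = X := by rw [Dsign_mul_Dsign]; simp
  right_inv := by
    intro X
    calc Dsign n * (Dsign n * X * Dsign n) * Dsign n
        = (Dsign n * Dsign n) * X * (Dsign n * Dsign n) := by noncomm_ring
      _ = X := by rw [Dsign_mul_Dsign]; simp
  map_add' := by intro x y; noncomm_ring
  map_smul' := by intro c x; simp [Matrix.mul_smul, Matrix.smul_mul]

lemma signConj_maps (ν : ℂ) (C : Matrix (Fin n) (Fin n) ℂ) :
    C ∈ SCgen n (-ν) ↔ signConj n C ∈ SCgen' n ν := by
  have key : (signConj n C) - Jmat n ν * (signConj n C)ᵀ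
      = Dsign n * (C + Jmat n (-ν) * Cᵀ) * Dsign n := by
    show Dsign n * C * Dsign n - Jmat n ν * (Dsign n * C * Dsign n)ᵀ = _
    have ht : (Dsign n * C * Dsign n)ᵀ = Dsign n * Cᵀ * Dsign n := by
      rw [Matrix.transpose_mul, Matrix.transpose_mul, Dsign_transpose, mul_assoc]
    rw [ht]
    have hJ : Jmat n ν = Dsign n * (-(Jmat n (-ν))) * Dsign n := by
      calc Jmat n ν = (Dsign n * Dsign n) * Jmat n ν * (Dsign n * Dsign n) := by
            rw [Dsign_mul_Dsign]; simp
        _ = Dsign n * (Dsign n * Jmat n ν * Dsign n) * Dsign n := by noncomm_ring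
        _ = Dsign n * (-(Jmat n (-ν))) * Dsign n := by rw [Dsign_Jmat]
    rw [hJ]
    have hmid : (Dsign n * (-(Jmat n (-ν))) * Dsign n) * (Dsign n * Cᵀ * Dsign n)
        = -(Dsign n * (Jmat n (-ν) * Cᵀ) * Dsign n) := by
      calc (Dsign n * (-(Jmat n (-ν))) * Dsign n) * (Dsign n * Cᵀ * Dsign n)
          = Dsign n * (-(Jmat n (-ν))) * (Dsign n * Dsign n) * Cᵀ * Dsign n := by
            noncomm_ring
        _ = Dsign n * (-(Jmat n (-ν))) * Cᵀ * Dsign n := by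
            rw [Dsign_mul_Dsign]; noncomm_ring
        _ = -(Dsign n * (Jmat n (-ν) * Cᵀ) * Dsign n) := by noncomm_ring
    rw [hmid]
    noncomm_ring
  constructor
  · intro h
    rw [mem_SCgen_iff] at h
    rw [mem_SCgen'_iff, key, h]
    simp
  · intro h
    rw [mem_SCgen'_iff, key] at h
    rw [mem_SCgen_iff]
    have h2 : Dsign n * (Dsign n * (C + Jmat n (-ν) * Cᵀ) * Dsign n) * Dsign n = 0 := by
      rw [h]; simp
    calc C + Jmat n (-ν) * Cᵀ
        = (Dsign n * Dsign n) * (C + Jmat n (-ν) * Cᵀ) * (Dsign n * Dsign n) := by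
          rw [Dsign_mul_Dsign]; simp
      _ = Dsign n * (Dsign n * (C + Jmat n (-ν) * Cᵀ) * Dsign n) * Dsign n := by
          noncomm_ring
      _ = 0 := h2

lemma SCgen_upper (hn : 1 ≤ n) {ν : ℂ} (hν0 : ν ≠ 0) :
    Module.finrank ℂ (SCgen n ν) + Module.finrank ℂ (SCgen n (-ν)) ≤ n := by
  have hmap : Submodule.map ((signConj n : Matrix (Fin n) (Fin n) ℂ ≃ₗ[ℂ] _) :
      Matrix (Fin n) (Fin n) ℂ →ₗ[ℂ] Matrix (Fin n) (Fin n) ℂ)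
      (SCgen n (-ν)) = SCgen' n ν := by
    ext C
    rw [Submodule.mem_map]
    constructor
    · rintro ⟨B, hB, rfl⟩
      exact (signConj_maps ν B).mp hB
    · intro h
      refine ⟨(signConj n).symm C, ?_, by simp⟩
      apply (signConj_maps ν ((signConj n).symm C)).mpr
      rwa [LinearEquiv.apply_symm_apply]
  have h1 : Module.finrank ℂ (SCgen' n ν) = Module.finrank ℂ (SCgen n (-ν)) := by
    rw [← hmap]
    exact LinearEquiv.finrank_map_eq _ _
  have h2 := Submodule.finrank_sup_add_finrank_inf_eq (SCgen n ν) (SCgen' n ν)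
  rw [SCgen_inf_SCgen' ν, finrank_bot] at h2
  have h3 : Module.finrank ℂ ((SCgen n ν ⊔ SCgen' n ν : Submodule ℂ _) :
      Submodule ℂ (Matrix (Fin n) (Fin n) ℂ)) ≤ Module.finrank ℂ (Vmod n ν) :=
    Submodule.finrank_mono (sup_le (SCgen_le_Vmod ν) (SCgen'_le_Vmod ν))
  have h4 := Vmod_finrank_le hn hν0
  omega

def SAmod (n : ℕ) (ν : ℂ) : Submodule ℂ (Matrix (Fin n) (Fin n) ℂ) where
  carrier := {P | Jmat n ν * P = P * Jmat n ν}
  zero_mem' := by simp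
  add_mem' := by
    intro a b ha hb
    simp only [Set.mem_setOf_eq] at *
    rw [mul_add, add_mul, ha, hb]
  smul_mem' := by
    intro c a ha
    simp only [Set.mem_setOf_eq] at *
    rw [Matrix.mul_smul, Matrix.smul_mul, ha]

lemma mem_SAmod_iff {ν : ℂ} {P : Matrix (Fin n) (Fin n) ℂ} :
    P ∈ SAmod n ν ↔ Jmat n ν * P = P * Jmat n ν := Iff.rfl

lemma J_mulVec_single (ν : ℂ) (j : Fin n) :
    Jmat n ν *ᵥ Pi.single j (1:ℂ)
      = ν • (Pi.single j 1 : Fin n → ℂ)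
        + (if h : 1 ≤ (j:ℕ) then (Pi.single ⟨(j:ℕ)-1, by omega⟩ 1 : Fin n → ℂ) else 0) := by
  funext i
  rw [Matrix.mulVec_single]
  show (Jmat n ν) i j * 1 = _
  rw [Jmat_apply, mul_one, Pi.add_apply, Pi.smul_apply, smul_eq_mul, Pi.single_apply]
  have hd : (if h : 1 ≤ (j:ℕ) then (Pi.single ⟨(j:ℕ)-1, by omega⟩ 1 : Fin n → ℂ) else 0) i
      = if (j:ℕ) = (i:ℕ)+1 then 1 else 0 := by
    by_cases h : 1 ≤ (j:ℕ)
    · rw [dif_pos h, Pi.single_apply]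
      have heq : (i = (⟨(j:ℕ)-1, by omega⟩ : Fin n)) ↔ ((j:ℕ) = (i:ℕ)+1) := by
        rw [Fin.ext_iff]
        constructor <;> intro hh <;> simp at hh ⊢ <;> omega
      by_cases h2 : (j:ℕ) = (i:ℕ)+1
      · rw [if_pos h2, if_pos (heq.mpr h2)]
      · rw [if_neg h2, if_neg (fun hc => h2 (heq.mp hc))]
    · rw [dif_neg h]
      have h2 : ¬ ((j:ℕ) = (i:ℕ)+1) := by omega
      rw [if_neg h2]
      rfl
  rw [hd]
  by_cases h1 : i = j <;> simp [h1]

lemma J_span_top (hn : 1 ≤ n) (ν : ℂ) :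
    Submodule.span ℂ (Set.range fun t : ℕ =>
      (Jmat n ν)^t *ᵥ Pi.single (⟨n-1, by omega⟩ : Fin n) (1:ℂ)) = ⊤ := by
  set eL : Fin n → ℂ := Pi.single (⟨n-1, by omega⟩ : Fin n) (1:ℂ) with heL
  set W := Submodule.span ℂ (Set.range fun t : ℕ => (Jmat n ν)^t *ᵥ eL) with hW
  have hstable : ∀ w ∈ W, Jmat n ν *ᵥ w ∈ W := by
    intro w hw
    induction hw using Submodule.span_induction with
    | mem x hx =>
        obtain ⟨t, rfl⟩ := hx
        rw [Matrix.mulVec_mulVec, ← pow_succ']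
        exact Submodule.subset_span ⟨t+1, rfl⟩
    | zero => rw [Matrix.mulVec_zero]; exact Submodule.zero_mem _
    | add x y _ _ hx hy => rw [Matrix.mulVec_add]; exact Submodule.add_mem _ hx hy
    | smul c x _ hx => rw [Matrix.mulVec_smul]; exact Submodule.smul_mem _ _ hx
  have hsingle : ∀ r, r < n → (Pi.single (⟨n-1-r, by omega⟩ : Fin n) 1 : Fin n → ℂ) ∈ W := by
    intro r
    induction r with
    | zero =>
        intro _
        have : (Pi.single (⟨n-1-0, by omega⟩ : Fin n) 1 : Fin n → ℂ) = (Jmat n ν)^0 *ᵥ eL := by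
          rw [pow_zero, Matrix.one_mulVec]
          rfl
        rw [this]
        exact Submodule.subset_span ⟨0, rfl⟩
    | succ r ih =>
        intro h
        have hr : r < n := by omega
        have hkey := J_mulVec_single (n := n) ν (⟨n-1-r, by omega⟩ : Fin n)
        have hj1 : 1 ≤ (((⟨n-1-r, by omega⟩ : Fin n)) : ℕ) := by
          show 1 ≤ n-1-r
          omega
        rw [dif_pos hj1] at hkey
        have hidx : (Pi.single (⟨(((⟨n-1-r, by omega⟩ : Fin n)):ℕ)-1, by omega⟩ : Fin n) 1 : Fin n → ℂ)
            = (Pi.single (⟨n-1-(r+1), by omega⟩ : Fin n) 1 : Fin n → ℂ) := by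
          have h2 : ((⟨(((⟨n-1-r, by omega⟩ : Fin n)):ℕ)-1, by omega⟩ : Fin n))
              = (⟨n-1-(r+1), by omega⟩ : Fin n) := by
            apply Fin.ext
            show (n-1-r)-1 = n-1-(r+1)
            omega
          rw [h2]
        rw [hidx] at hkey
        have : (Pi.single (⟨n-1-(r+1), by omega⟩ : Fin n) 1 : Fin n → ℂ)
            = Jmat n ν *ᵥ (Pi.single (⟨n-1-r, by omega⟩ : Fin n) 1 : Fin n → ℂ)
              - ν • (Pi.single (⟨n-1-r, by omega⟩ : Fin n) 1 : Fin n → ℂ) := by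
          rw [hkey]; abel
        rw [this]
        exact Submodule.sub_mem _ (hstable _ (ih hr)) (Submodule.smul_mem _ _ (ih hr))
  rw [eq_top_iff]
  intro y _
  have hy : y = ∑ i : Fin n, y i • (Pi.single i 1 : Fin n → ℂ) := by
    funext j
    rw [Finset.sum_apply]
    simp [Pi.single_apply, eq_comm]
  rw [hy]
  apply Submodule.sum_mem
  intro i _
  have : i = (⟨n-1-(n-1-(i:ℕ)), by omega⟩ : Fin n) := by
    apply Fin.ext
    show (i:ℕ) = n-1-(n-1-(i:ℕ))
    have := i.isLt
    omega
  rw [this]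
  exact Submodule.smul_mem _ _ (hsingle (n-1-(i:ℕ)) (by have := i.isLt; omega))

lemma SAmod_finrank (hn : 1 ≤ n) (ν : ℂ) :
    Module.finrank ℂ (SAmod n ν) = n := by
  set eL : Fin n → ℂ := Pi.single (⟨n-1, by omega⟩ : Fin n) (1:ℂ) with heL
  set ev : (SAmod n ν) →ₗ[ℂ] (Fin n → ℂ) :=
    { toFun := fun P => (P : Matrix (Fin n) (Fin n) ℂ) *ᵥ eL
      map_add' := by intro x y; simp [Matrix.add_mulVec]
      map_smul' := by intro c x; simp [Matrix.smul_mulVec] } with hev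
  have hinj : Function.Injective ev := by
    rw [← LinearMap.ker_eq_bot, Submodule.eq_bot_iff]
    rintro ⟨P, hP⟩ hker
    have hc : Commute (Jmat n ν) P := hP
    have h0 : P *ᵥ eL = 0 := hker
    have hz : ∀ t : ℕ, P *ᵥ ((Jmat n ν)^t *ᵥ eL) = 0 := by
      intro t
      rw [Matrix.mulVec_mulVec, ← (hc.pow_left t).eq, ← Matrix.mulVec_mulVec, h0,
        Matrix.mulVec_zero]
    have hall : ∀ y : Fin n → ℂ, P *ᵥ y = 0 := by
      intro y
      have hy : y ∈ Submodule.span ℂ (Set.range fun t : ℕ => (Jmat n ν)^t *ᵥ eL) := by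
        rw [J_span_top hn ν]; trivial
      induction hy using Submodule.span_induction with
      | mem x hx => obtain ⟨t, rfl⟩ := hx; exact hz t
      | zero => exact Matrix.mulVec_zero P
      | add x y _ _ hx hy => rw [Matrix.mulVec_add, hx, hy, add_zero]
      | smul c x _ hx => rw [Matrix.mulVec_smul, hx, smul_zero]
    have : P = 0 := by
      ext i j
      have := congrFun (hall (Pi.single j 1)) i
      rw [Matrix.mulVec_single] at this
      simpa using this
    exact Subtype.ext this
  -- surjectivity
  set N : Matrix (Fin n) (Fin n) ℂ := Jmat n ν - ν • 1 with hN
  have hNmem : ∀ d : ℕ, N^d ∈ SAmod n ν := by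
    intro d
    have hcN : Commute (Jmat n ν) N :=
      (Commute.refl _).sub_right (Commute.smul_right (Commute.one_right _) ν)
    exact (hcN.pow_right d).eq
  have hN_single : ∀ j : Fin n, N *ᵥ (Pi.single j 1 : Fin n → ℂ)
      = (if h : 1 ≤ (j:ℕ) then (Pi.single ⟨(j:ℕ)-1, by omega⟩ 1 : Fin n → ℂ) else 0) := by
    intro j
    rw [hN, Matrix.sub_mulVec, J_mulVec_single]
    have : (ν • (1:Matrix (Fin n) (Fin n) ℂ)) *ᵥ (Pi.single j 1 : Fin n → ℂ)
        = ν • (Pi.single j 1 : Fin n → ℂ) := by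
      rw [Matrix.smul_mulVec, Matrix.one_mulVec]
    rw [this]
    abel
  have hNpow : ∀ d : ℕ, d < n → (N^d) *ᵥ eL = (Pi.single (⟨n-1-d, by omega⟩ : Fin n) 1 : Fin n → ℂ) := by
    intro d
    induction d with
    | zero =>
        intro _
        rw [pow_zero, Matrix.one_mulVec]
        rfl
    | succ d ih =>
        intro h
        rw [pow_succ', ← Matrix.mulVec_mulVec, ih (by omega), hN_single]
        have hj1 : 1 ≤ ((⟨n-1-d, by omega⟩ : Fin n) : ℕ) := by
          show 1 ≤ n-1-d
          omega
        rw [dif_pos hj1]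
        have h2 : ((⟨(((⟨n-1-d, by omega⟩ : Fin n)):ℕ)-1, by omega⟩ : Fin n))
            = (⟨n-1-(d+1), by omega⟩ : Fin n) := by
          apply Fin.ext
          show (n-1-d)-1 = n-1-(d+1)
          omega
        rw [h2]
  have hsurj : Function.Surjective ev := by
    have hrange : LinearMap.range ev = ⊤ := by
      rw [eq_top_iff]
      intro y _
      have hy : y = ∑ i : Fin n, y i • (Pi.single i 1 : Fin n → ℂ) := by
        funext j
        rw [Finset.sum_apply]
        simp [Pi.single_apply, eq_comm]
      rw [hy]
      apply Submodule.sum_mem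
      intro i _
      apply Submodule.smul_mem
      refine ⟨⟨N^(n-1-(i:ℕ)), hNmem _⟩, ?_⟩
      show (N^(n-1-(i:ℕ))) *ᵥ eL = _
      rw [hNpow (n-1-(i:ℕ)) (by have := i.isLt; omega)]
      have hii : ((⟨n-1-(n-1-(i:ℕ)), by omega⟩ : Fin n)) = i := by
        apply Fin.ext
        show n-1-(n-1-(i:ℕ)) = (i:ℕ)
        have := i.isLt
        omega
      rw [hii]
    intro y
    have : y ∈ LinearMap.range ev := by rw [hrange]; trivial
    exact this
  have e := LinearEquiv.ofBijective ev ⟨hinj, hsurj⟩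
  rw [e.finrank_eq, Module.finrank_fin_fun]

def SBmod (n : ℕ) (ν : ℂ) : Submodule ℂ (Matrix (Fin n) (Fin n) ℂ) where
  carrier := {B | B * Jmat n ν + Bᵀ = 0}
  zero_mem' := by simp
  add_mem' := by
    intro a b ha hb
    simp only [Set.mem_setOf_eq] at *
    rw [transpose_add, add_mul]
    calc a * Jmat n ν + b * Jmat n ν + (aᵀ + bᵀ)
        = (a * Jmat n ν + aᵀ) + (b * Jmat n ν + bᵀ) := by abel
      _ = 0 := by rw [ha, hb]; simp
  smul_mem' := by
    intro c a ha
    simp only [Set.mem_setOf_eq] at *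
    rw [transpose_smul, Matrix.smul_mul, ← smul_add, ha, smul_zero]

lemma mem_SBmod_iff {ν : ℂ} {B : Matrix (Fin n) (Fin n) ℂ} :
    B ∈ SBmod n ν ↔ B * Jmat n ν + Bᵀ = 0 := Iff.rfl

def sbEquiv (n : ℕ) (ν : ℂ) (hν0 : ν ≠ 0) :
    Matrix (Fin n) (Fin n) ℂ ≃ₗ[ℂ] Matrix (Fin n) (Fin n) ℂ where
  toFun B := (Rev n * (B * Jmat n ν) * Rev n)ᵀ
  invFun C := Rev n * Cᵀ * Rev n * (Jmat n ν)⁻¹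
  left_inv := by
    intro B
    show Rev n * ((Rev n * (B * Jmat n ν) * Rev n)ᵀ)ᵀ * Rev n * (Jmat n ν)⁻¹ = B
    rw [transpose_transpose]
    have hdet : IsUnit (Jmat n ν).det := (Matrix.isUnit_iff_isUnit_det _).mp (Jmat_isUnit hν0)
    calc Rev n * (Rev n * (B * Jmat n ν) * Rev n) * Rev n * (Jmat n ν)⁻¹
        = (Rev n * Rev n) * (B * Jmat n ν) * ((Rev n * Rev n) * (Jmat n ν)⁻¹) := by
          noncomm_ring
      _ = B * (Jmat n ν * (Jmat n ν)⁻¹) := by rw [Rev_mul_Rev]; noncomm_ring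
      _ = B := by rw [Matrix.mul_nonsing_inv _ hdet, mul_one]
  right_inv := by
    intro C
    show (Rev n * ((Rev n * Cᵀ * Rev n * (Jmat n ν)⁻¹) * Jmat n ν) * Rev n)ᵀ = C
    have hdet : IsUnit (Jmat n ν).det := (Matrix.isUnit_iff_isUnit_det _).mp (Jmat_isUnit hν0)
    have h1 : (Rev n * Cᵀ * Rev n * (Jmat n ν)⁻¹) * Jmat n ν = Rev n * Cᵀ * Rev n := by
      rw [mul_assoc, Matrix.nonsing_inv_mul _ hdet, mul_one]
    rw [h1]
    have h2 : Rev n * (Rev n * Cᵀ * Rev n) * Rev n = Cᵀ := by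
      calc Rev n * (Rev n * Cᵀ * Rev n) * Rev n
          = (Rev n * Rev n) * Cᵀ * (Rev n * Rev n) := by noncomm_ring
        _ = Cᵀ := by rw [Rev_mul_Rev]; simp
    rw [h2, transpose_transpose]
  map_add' := by
    intro x y
    show (Rev n * ((x + y) * Jmat n ν) * Rev n)ᵀ = _
    rw [add_mul, mul_add, add_mul, transpose_add]
  map_smul' := by
    intro c x
    show (Rev n * ((c • x) * Jmat n ν) * Rev n)ᵀ = _
    rw [Matrix.smul_mul, Matrix.mul_smul, Matrix.smul_mul, transpose_smul]
    rfl

lemma sbEquiv_key (ν : ℂ) (hν0 : ν ≠ 0) (B : Matrix (Fin n) (Fin n) ℂ) :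
    sbEquiv n ν hν0 B + Jmat n ν * (sbEquiv n ν hν0 B)ᵀ
      = Rev n * ((Jmat n ν)ᵀ * (B * Jmat n ν + Bᵀ)) * Rev n := by
  show (Rev n * (B * Jmat n ν) * Rev n)ᵀ
      + Jmat n ν * ((Rev n * (B * Jmat n ν) * Rev n)ᵀ)ᵀ = _
  rw [transpose_transpose]
  have hJR : Jmat n ν * Rev n = Rev n * (Jmat n ν)ᵀ := by
    have h := Rev_mul_Jmat_mul_Rev (n := n) ν
    calc Jmat n ν * Rev n = (Rev n * Rev n) * Jmat n ν * Rev n := by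
          rw [Rev_mul_Rev]; simp
      _ = Rev n * (Rev n * Jmat n ν * Rev n) := by noncomm_ring
      _ = Rev n * (Jmat n ν)ᵀ := by rw [h]
  have ht : (Rev n * (B * Jmat n ν) * Rev n)ᵀ
      = Rev n * ((Jmat n ν)ᵀ * Bᵀ) * Rev n := by
    rw [transpose_mul, transpose_mul, transpose_mul, Rev_transpose]
    noncomm_ring
  rw [ht]
  have h2 : Jmat n ν * (Rev n * (B * Jmat n ν) * Rev n)
      = Rev n * ((Jmat n ν)ᵀ * (B * Jmat n ν)) * Rev n := by
    calc Jmat n ν * (Rev n * (B * Jmat n ν) * Rev n)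
        = (Jmat n ν * Rev n) * (B * Jmat n ν) * Rev n := by noncomm_ring
      _ = (Rev n * (Jmat n ν)ᵀ) * (B * Jmat n ν) * Rev n := by rw [hJR]
      _ = Rev n * ((Jmat n ν)ᵀ * (B * Jmat n ν)) * Rev n := by noncomm_ring
  rw [h2]
  rw [mul_add]
  noncomm_ring

lemma sbEquiv_mem (ν : ℂ) (hν0 : ν ≠ 0) (B : Matrix (Fin n) (Fin n) ℂ) :
    B ∈ SBmod n ν ↔ sbEquiv n ν hν0 B ∈ SCgen n ν := by
  rw [mem_SBmod_iff, mem_SCgen_iff, sbEquiv_key ν hν0 B]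
  constructor
  · intro h
    rw [h]
    simp
  · intro h
    have h3 : (Jmat n ν)ᵀ * (B * Jmat n ν + Bᵀ) = 0 := by
      calc (Jmat n ν)ᵀ * (B * Jmat n ν + Bᵀ)
          = (Rev n * Rev n) * ((Jmat n ν)ᵀ * (B * Jmat n ν + Bᵀ)) * (Rev n * Rev n) := by
            rw [Rev_mul_Rev]; simp
        _ = Rev n * (Rev n * ((Jmat n ν)ᵀ * (B * Jmat n ν + Bᵀ)) * Rev n) * Rev n := by
            noncomm_ring
        _ = 0 := by rw [h]; simp
    have hdet : IsUnit ((Jmat n ν)ᵀ).det := by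
      rw [Matrix.det_transpose]
      exact (Matrix.isUnit_iff_isUnit_det _).mp (Jmat_isUnit hν0)
    calc B * Jmat n ν + Bᵀ
        = (((Jmat n ν)ᵀ)⁻¹ * (Jmat n ν)ᵀ) * (B * Jmat n ν + Bᵀ) := by
          rw [Matrix.nonsing_inv_mul _ hdet, one_mul]
      _ = ((Jmat n ν)ᵀ)⁻¹ * ((Jmat n ν)ᵀ * (B * Jmat n ν + Bᵀ)) := by rw [mul_assoc]
      _ = 0 := by rw [h3, mul_zero]

lemma SBmod_finrank_eq (ν : ℂ) (hν0 : ν ≠ 0) :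
    Module.finrank ℂ (SBmod n ν) = Module.finrank ℂ (SCgen n ν) := by
  have hmap : Submodule.map ((sbEquiv n ν hν0 :
        Matrix (Fin n) (Fin n) ℂ ≃ₗ[ℂ] Matrix (Fin n) (Fin n) ℂ) :
        Matrix (Fin n) (Fin n) ℂ →ₗ[ℂ] Matrix (Fin n) (Fin n) ℂ)
      (SBmod n ν) = SCgen n ν := by
    ext C
    rw [Submodule.mem_map]
    constructor
    · rintro ⟨B, hB, rfl⟩
      exact (sbEquiv_mem ν hν0 B).mp hB
    · intro h
      refine ⟨(sbEquiv n ν hν0).symm C, ?_, by simp⟩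
      apply (sbEquiv_mem ν hν0 ((sbEquiv n ν hν0).symm C)).mpr
      rwa [LinearEquiv.apply_symm_apply]
  rw [← hmap]
  exact (LinearEquiv.finrank_map_eq (sbEquiv n ν hν0) (SBmod n ν)).symm

def Lmap (n : ℕ) (μ : ℂ) :
    Matrix (Fin n ⊕ Fin n) (Fin n ⊕ Fin n) ℂ →ₗ[ℂ] Matrix (Fin n ⊕ Fin n) (Fin n ⊕ Fin n) ℂ where
  toFun X := X * Hmat n μ + Hmat n μ * Xᵀ
  map_add' x y := by
    show (x + y) * Hmat n μ + Hmat n μ * (x + y)ᵀ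
      = (x * Hmat n μ + Hmat n μ * xᵀ) + (y * Hmat n μ + Hmat n μ * yᵀ)
    rw [transpose_add, add_mul, mul_add]
    abel
  map_smul' c x := by
    show (c • x) * Hmat n μ + Hmat n μ * (c • x)ᵀ
      = c • (x * Hmat n μ + Hmat n μ * xᵀ)
    rw [transpose_smul, Matrix.smul_mul, Matrix.mul_smul, ← smul_add]

lemma blocks_iff (μ : ℂ) (A B C D : Matrix (Fin n) (Fin n) ℂ) :
    (Matrix.fromBlocks A B C D) * Hmat n μ
      + Hmat n μ * (Matrix.fromBlocks A B C D)ᵀ = 0 ↔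
    (Jmat n μ * Aᵀ = Aᵀ * Jmat n μ ∧ B * Jmat n μ + Bᵀ = 0
      ∧ C + Jmat n μ * Cᵀ = 0 ∧ D = -Aᵀ) := by
  rw [Hmat, Matrix.fromBlocks_transpose, Matrix.fromBlocks_multiply,
    Matrix.fromBlocks_multiply, Matrix.fromBlocks_add,
    show (0 : Matrix (Fin n ⊕ Fin n) (Fin n ⊕ Fin n) ℂ) = Matrix.fromBlocks 0 0 0 0 from
      Matrix.fromBlocks_zero.symm,
    Matrix.fromBlocks_inj]
  simp only [Matrix.mul_zero, Matrix.zero_mul, Matrix.mul_one, Matrix.one_mul,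
    add_zero, zero_add]
  constructor
  · rintro ⟨h1, h2, h3, h4⟩
    have hD : D = -Aᵀ := by
      have h5 := eq_neg_of_add_eq_zero_right h2
      calc D = (Dᵀ)ᵀ := (transpose_transpose D).symm
        _ = (-A)ᵀ := by rw [h5]
        _ = -Aᵀ := by rw [transpose_neg]
    refine ⟨?_, h1, h4, hD⟩
    rw [hD, Matrix.neg_mul] at h3
    have h7 : -(Aᵀ * Jmat n μ) + Jmat n μ * Aᵀ + Aᵀ * Jmat n μ = Aᵀ * Jmat n μ := by
      rw [h3, zero_add]
    calc Jmat n μ * Aᵀ = -(Aᵀ * Jmat n μ) + Jmat n μ * Aᵀ + Aᵀ * Jmat n μ := by abel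
      _ = Aᵀ * Jmat n μ := h7
  · rintro ⟨hc, h1, h4, hD⟩
    refine ⟨h1, ?_, ?_, h4⟩
    · rw [hD, transpose_neg, transpose_transpose]
      abel
    · rw [hD, Matrix.neg_mul, hc]
      abel

lemma ker_blocks {μ : ℂ} {X : Matrix (Fin n ⊕ Fin n) (Fin n ⊕ Fin n) ℂ}
    (hX : X ∈ LinearMap.ker (Lmap n μ)) :
    Jmat n μ * (X.toBlocks₁₁)ᵀ = (X.toBlocks₁₁)ᵀ * Jmat n μ
    ∧ X.toBlocks₁₂ * Jmat n μ + (X.toBlocks₁₂)ᵀ = 0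
    ∧ X.toBlocks₂₁ + Jmat n μ * (X.toBlocks₂₁)ᵀ = 0
    ∧ X.toBlocks₂₂ = -(X.toBlocks₁₁)ᵀ := by
  apply (blocks_iff μ _ _ _ _).mp
  rw [Matrix.fromBlocks_toBlocks]
  have h := LinearMap.mem_ker.mp hX
  simp only [Lmap, LinearMap.coe_mk, AddHom.coe_mk] at h
  exact h

set_option maxHeartbeats 2000000 in
def blockEquiv (n : ℕ) (μ : ℂ) :
    (LinearMap.ker (Lmap n μ)) ≃ₗ[ℂ] ((SAmod n μ) × (SBmod n μ) × (SCgen n μ)) where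
  toFun X :=
    (⟨((X : Matrix (Fin n ⊕ Fin n) (Fin n ⊕ Fin n) ℂ).toBlocks₁₁)ᵀ,
        mem_SAmod_iff.mpr (ker_blocks X.2).1⟩,
     ⟨(X : Matrix (Fin n ⊕ Fin n) (Fin n ⊕ Fin n) ℂ).toBlocks₁₂,
        mem_SBmod_iff.mpr (ker_blocks X.2).2.1⟩,
     ⟨(X : Matrix (Fin n ⊕ Fin n) (Fin n ⊕ Fin n) ℂ).toBlocks₂₁,
        mem_SCgen_iff.mpr (ker_blocks X.2).2.2.1⟩)
  invFun T :=
    ⟨Matrix.fromBlocks ((T.1 : Matrix (Fin n) (Fin n) ℂ))ᵀ (T.2.1 : Matrix (Fin n) (Fin n) ℂ)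
      (T.2.2 : Matrix (Fin n) (Fin n) ℂ) (-(T.1 : Matrix (Fin n) (Fin n) ℂ)), by
      rw [LinearMap.mem_ker]
      simp only [Lmap, LinearMap.coe_mk, AddHom.coe_mk]
      apply (blocks_iff μ _ _ _ _).mpr
      refine ⟨?_, mem_SBmod_iff.mp T.2.1.2, mem_SCgen_iff.mp T.2.2.2, ?_⟩
      · rw [transpose_transpose]
        exact mem_SAmod_iff.mp T.1.2
      · rw [transpose_transpose]⟩
  left_inv := by
    intro X
    apply Subtype.ext
    show Matrix.fromBlocks _ _ _ _ = (X : Matrix (Fin n ⊕ Fin n) (Fin n ⊕ Fin n) ℂ)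
    rw [transpose_transpose, ← (ker_blocks X.2).2.2.2, Matrix.fromBlocks_toBlocks]
  right_inv := by
    intro T
    refine Prod.ext (Subtype.ext ?_) (Prod.ext (Subtype.ext ?_) (Subtype.ext ?_))
    · show ((Matrix.fromBlocks _ _ _ _).toBlocks₁₁)ᵀ = _
      rw [Matrix.toBlocks_fromBlocks₁₁, transpose_transpose]
    · show (Matrix.fromBlocks _ _ _ _).toBlocks₁₂ = _
      rw [Matrix.toBlocks_fromBlocks₁₂]
    · show (Matrix.fromBlocks _ _ _ _).toBlocks₂₁ = _
      rw [Matrix.toBlocks_fromBlocks₂₁]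
  map_add' := by
    intro x y
    refine Prod.ext (Subtype.ext ?_) (Prod.ext (Subtype.ext ?_) (Subtype.ext ?_)) <;>
      (ext i j; rfl)
  map_smul' := by
    intro c x
    refine Prod.ext (Subtype.ext ?_) (Prod.ext (Subtype.ext ?_) (Subtype.ext ?_)) <;>
      (ext i j; rfl)

/-- the solutions `X` of `X·H_{2n}(μ) + H_{2n}(μ)·Xᵀ = 0` (with `μ = (-1)^n`)
form a complex subspace of dimension `n + 2⌈n/2⌉`. -/
theorem stmt_16 (n : ℕ) (hn : 1 ≤ n) (μ : ℂ) (hμ : μ = (-1) ^ n) :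
    ∃ S : Submodule ℂ (Matrix (Fin n ⊕ Fin n) (Fin n ⊕ Fin n) ℂ),
      (∀ X, X ∈ S ↔ X * Hmat n μ + Hmat n μ * Xᵀ = 0) ∧
      Module.finrank ℂ S = n + 2 * ((n + 1) / 2) := by
  have hμ0 : μ ≠ 0 := by
    rw [hμ]
    exact pow_ne_zero n (by norm_num)
  refine ⟨LinearMap.ker (Lmap n μ), fun X => Iff.rfl, ?_⟩
  rw [(blockEquiv n μ).finrank_eq, Module.finrank_prod, Module.finrank_prod,
    SAmod_finrank hn μ, SBmod_finrank_eq μ hμ0]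
  have hμ' : -μ = (-1:ℂ)^(n-1) := by
    have hpe : (-1:ℂ)^(n-1) * (-1:ℂ)^1 = (-1:ℂ)^n := by
      rw [← pow_add]
      congr 1
      omega
    rw [pow_one] at hpe
    rw [hμ]
    linear_combination hpe
  have hp1 : 2*((n+1)/2) ≤ n+1 := by omega
  have hM2 : n-1 ≤ n := by omega
  have hp2 : 2*(n/2) ≤ (n-1)+1 := by omega
  have d1 := SCgen_lower μ n ((n+1)/2) le_rfl hp1 hμ
  have d2 := SCgen_lower (-μ) (n-1) (n/2) hM2 hp2 hμ'
  have up := SCgen_upper hn hμ0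
  omega
end
end
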